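/- arXiv:1706.05651 — 6 statements merged into one kernel-verified Lean document; each statement's English description precedes it below -/
import Mathlib

section
/- Let q be a prime, and let t, m, ℓ be positive integers. Let X be a subset of (ℤ/qℤ)^t, let f_1,...,f_m : X → ℤ/qℤ, let σ_1,...,σ_{2ℓ} be residues mod q each nonzero, and let λ_1,...,λ_m ∈ ℤ/qℤ. Then the number of tuples (x_1,...,x_{2ℓ}) ∈ X^{2ℓ} satisfying σ_1 f_j(x_1)+⋯+σ_{2ℓ} f_j(x_{2ℓ}) ≡ λ_j (mod q) for all j = 1,...,m is at most the number of tuples (x_1,...,x_{2ℓ}) ∈ X^{2ℓ} satisfying Σ_{i=1}^{2ℓ} (-1)^i f_j(x_i) ≡ 0 (mod q) for all j = 1,...,m. -/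
open Finset Complex

section aux
variable {q : ℕ} [NeZero q]

omit [NeZero q] in
lemma addChar_sum' {ι : Type*} (ψ : AddChar (ZMod q) ℂ) (s : Finset ι) (g : ι → ZMod q) :
    ψ (∑ i ∈ s, g i) = ∏ i ∈ s, ψ (g i) := by
  induction s using Finset.cons_induction with
  | empty => simp
  | cons i s hi ih => rw [Finset.sum_cons, Finset.prod_cons, AddChar.map_add_eq_mul, ih]

lemma stdAddChar_norm (a : ZMod q) : ‖(ZMod.stdAddChar a : ℂ)‖ = 1 := by
  rw [ZMod.stdAddChar_apply]; exact Circle.norm_coe _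

lemma stdAddChar_ne_zero (a : ZMod q) : (ZMod.stdAddChar a : ℂ) ≠ 0 := by
  intro h
  have := stdAddChar_norm a
  rw [h] at this; simp at this

lemma stdAddChar_neg (a : ZMod q) :
    ZMod.stdAddChar (-a) = (starRingEnd ℂ) (ZMod.stdAddChar a) := by
  have h1 : ZMod.stdAddChar (-a) * ZMod.stdAddChar a = 1 := by
    rw [← AddChar.map_add_eq_mul, neg_add_cancel, AddChar.map_zero_eq_one]
  have h2 : (starRingEnd ℂ) (ZMod.stdAddChar a) * ZMod.stdAddChar a = 1 := by
    rw [mul_comm, Complex.mul_conj]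
    norm_cast
    rw [← Complex.sq_norm, stdAddChar_norm]; norm_num
  exact mul_right_cancel₀ (stdAddChar_ne_zero a) (h1.trans h2.symm)

end aux

lemma card_even_fin (ℓ : ℕ) :
    (Finset.univ.filter fun i : Fin (2 * ℓ) => Even i.val).card = ℓ := by
  classical
  have h : (Finset.univ.filter fun i : Fin (2 * ℓ) => Even i.val).card
      = (Finset.univ : Finset (Fin ℓ)).card := Finset.card_bij'
    (fun (a : Fin (2*ℓ)) _ => (⟨a.val / 2, by have := a.isLt; omega⟩ : Fin ℓ))
    (fun (b : Fin ℓ) _ => (⟨2 * b.val, by have := b.isLt; omega⟩ : Fin (2*ℓ)))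
    (fun a ha => Finset.mem_univ _)
    (fun b hb => by simp [Nat.even_iff])
    (fun a ha => by
      have h := Finset.mem_filter.mp ha
      rw [Nat.even_iff] at h
      ext; simp; omega)
    (fun b hb => by ext; simp)
  rw [h, Finset.card_fin]

lemma amgm_pow {n : ℕ} (hn : n ≠ 0) (b : Fin n → ℝ) (hb : ∀ i, 0 ≤ b i) :
    ∏ i, b i ≤ (∑ i, b i ^ n) / n := by
  have h := Real.geom_mean_le_arith_mean_weighted Finset.univ
    (fun _ : Fin n => (n : ℝ)⁻¹) (fun i => b i ^ n)
    (fun i _ => inv_nonneg.mpr (Nat.cast_nonneg n))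
    (by simp [Finset.card_univ, mul_inv_cancel₀ (by exact_mod_cast hn : (n:ℝ) ≠ 0)])
    (fun i _ => pow_nonneg (hb i) n)
  calc ∏ i, b i = ∏ i, (b i ^ n) ^ ((n : ℝ)⁻¹) := by
        refine Finset.prod_congr rfl fun i _ => ?_
        rw [← Real.rpow_natCast (b i) n, ← Real.rpow_mul (hb i),
          mul_inv_cancel₀ (by exact_mod_cast hn : (n:ℝ) ≠ 0), Real.rpow_one]
    _ ≤ ∑ i, (n : ℝ)⁻¹ * b i ^ n := h
    _ = (∑ i, b i ^ n) / n := by rw [← Finset.mul_sum]; ring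

noncomputable def Tf (q t m : ℕ) [NeZero q] (X : Set (Fin t → ZMod q))
    (f : Fin m → (Fin t → ZMod q) → ZMod q) (η : Fin m → ZMod q) : ℂ :=
  ∑ x ∈ (Set.toFinite X).toFinset, ZMod.stdAddChar (∑ j, η j * f j x)

lemma count_eq (q t m : ℕ) [NeZero q] (X : Set (Fin t → ZMod q))
    (f : Fin m → (Fin t → ZMod q) → ZMod q) {n : ℕ} (c : Fin n → ZMod q)
    (lam : Fin m → ZMod q) :
    ∑ η : Fin m → ZMod q, (∏ i, Tf q t m X f (c i • η)) *
        ZMod.stdAddChar (-∑ j, η j * lam j)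
    = (q : ℂ)^m * (Nat.card {x : Fin n → (Fin t → ZMod q) //
        (∀ i, x i ∈ X) ∧ ∀ j, ∑ i, c i * f j (x i) = lam j}) := by
  classical
  have step1 : ∀ η : Fin m → ZMod q,
      (∏ i, Tf q t m X f (c i • η))
      = ∑ p ∈ Fintype.piFinset (fun _ : Fin n => (Set.toFinite X).toFinset),
          ∏ i, ZMod.stdAddChar (∑ j, c i * η j * f j (p i)) := by
    intro η
    simp only [Tf, Pi.smul_apply, smul_eq_mul]
    rw [Finset.prod_univ_sum]
  calc ∑ η : Fin m → ZMod q, (∏ i, Tf q t m X f (c i • η)) *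
          ZMod.stdAddChar (-∑ j, η j * lam j)
      = ∑ η : Fin m → ZMod q,
          ∑ p ∈ Fintype.piFinset (fun _ : Fin n => (Set.toFinite X).toFinset),
          ZMod.stdAddChar (∑ j, η j * ((∑ i, c i * f j (p i)) - lam j)) := by
        refine Finset.sum_congr rfl fun η _ => ?_
        rw [step1 η, Finset.sum_mul]
        refine Finset.sum_congr rfl fun p _ => ?_
        rw [← addChar_sum', ← AddChar.map_add_eq_mul]
        congr 1
        rw [← sub_eq_add_neg, Finset.sum_comm, ← Finset.sum_sub_distrib]
        refine Finset.sum_congr rfl fun j _ => ?_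
        rw [mul_sub, Finset.mul_sum]
        congr 1
        exact Finset.sum_congr rfl fun i _ => by ring
    _ = ∑ p ∈ Fintype.piFinset (fun _ : Fin n => (Set.toFinite X).toFinset),
          (if (∀ j, (∑ i, c i * f j (p i)) = lam j) then ((q : ℂ))^m else 0) := by
        rw [Finset.sum_comm]
        refine Finset.sum_congr rfl fun p _ => ?_
        have h1 : ∀ η : Fin m → ZMod q,
            ZMod.stdAddChar (∑ j, η j * ((∑ i, c i * f j (p i)) - lam j))
            = ∏ j, ZMod.stdAddChar (η j * ((∑ i, c i * f j (p i)) - lam j)) :=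
          fun η => addChar_sum' _ _ _
        simp only [h1]
        have h2 := Finset.prod_univ_sum (fun _ : Fin m => (univ : Finset (ZMod q)))
          (fun j u => ZMod.stdAddChar (u * ((∑ i, c i * f j (p i)) - lam j)))
        rw [Fintype.piFinset_univ] at h2
        rw [← h2]
        have h3 : ∀ j : Fin m, ∑ u : ZMod q,
            ZMod.stdAddChar (u * ((∑ i, c i * f j (p i)) - lam j))
            = if (∑ i, c i * f j (p i)) = lam j then (q : ℂ) else 0 := by
          intro j
          rw [AddChar.sum_mulShift _ (ZMod.isPrimitive_stdAddChar q)]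
          simp [sub_eq_zero, ZMod.card]
        simp only [h3]
        by_cases h : ∀ j, (∑ i, c i * f j (p i)) = lam j
        · simp [h, Finset.prod_const, Finset.card_univ]
        · push_neg at h
          obtain ⟨j, hj⟩ := h
          rw [if_neg (by push_neg; exact ⟨j, hj⟩), Finset.prod_eq_zero (Finset.mem_univ j)]
          simp [hj]
    _ = (q : ℂ)^m * (Nat.card {x : Fin n → (Fin t → ZMod q) //
          (∀ i, x i ∈ X) ∧ ∀ j, ∑ i, c i * f j (x i) = lam j}) := by
        rw [← Finset.sum_filter, Finset.sum_const, nsmul_eq_mul, mul_comm]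
        congr 1
        rw [Nat.card_eq_fintype_card, Fintype.card_subtype]
        norm_cast
        congr 1
        ext p
        simp only [Finset.mem_filter, Fintype.mem_piFinset, Set.Finite.mem_toFinset,
          Finset.mem_univ, true_and, and_comm]

lemma Tf_neg (q t m : ℕ) [NeZero q] (X : Set (Fin t → ZMod q))
    (f : Fin m → (Fin t → ZMod q) → ZMod q) (η : Fin m → ZMod q) :
    Tf q t m X f (-η) = (starRingEnd ℂ) (Tf q t m X f η) := by
  simp only [Tf, map_sum]
  refine Finset.sum_congr rfl fun x _ => ?_
  rw [← stdAddChar_neg]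
  congr 1
  simp [Finset.sum_neg_distrib]

lemma alt_sum (q t m ℓ : ℕ) [NeZero q] (X : Set (Fin t → ZMod q))
    (f : Fin m → (Fin t → ZMod q) → ZMod q) (η : Fin m → ZMod q) :
    (∏ i : Fin (2 * ℓ), Tf q t m X f (((-1 : ZMod q) ^ (i.val + 1)) • η))
    = ((‖Tf q t m X f η‖) ^ (2 * ℓ) : ℝ) := by
  classical
  have hc : ∀ i : Fin (2 * ℓ), ((-1 : ZMod q) ^ (i.val + 1))
      = if Even i.val then (-1 : ZMod q) else 1 := by
    intro i
    by_cases h : Even i.val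
    · rw [if_pos h, Odd.neg_one_pow (Even.add_one h)]
    · rw [if_neg h, Even.neg_one_pow (Nat.even_add_one.mpr h)]
  calc (∏ i : Fin (2 * ℓ), Tf q t m X f (((-1 : ZMod q) ^ (i.val + 1)) • η))
      = ∏ i : Fin (2 * ℓ),
          (if Even i.val then Tf q t m X f (-η) else Tf q t m X f η) := by
        refine Finset.prod_congr rfl fun i _ => ?_
        rw [hc i, apply_ite (fun c : ZMod q => Tf q t m X f (c • η)), neg_one_smul, one_smul]
    _ = (Tf q t m X f (-η)) ^ ℓ * (Tf q t m X f η) ^ ℓ := by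
        rw [Finset.prod_ite, Finset.prod_const, Finset.prod_const, card_even_fin]
        congr 2
        have := Finset.card_filter_add_card_filter_not
          (s := (Finset.univ : Finset (Fin (2 * ℓ)))) (p := fun i => Even i.val)
        rw [card_even_fin] at this
        simp only [Finset.card_univ, Fintype.card_fin] at this
        omega
    _ = ((‖Tf q t m X f η‖) ^ (2 * ℓ) : ℝ) := by
        rw [Tf_neg, ← mul_pow, mul_comm, Complex.mul_conj]
        rw [two_mul, pow_add]
        push_cast [← Complex.sq_norm]
        ring

theorem stmt_0 (q t m ℓ : ℕ) (hq : q.Prime) (ht : 0 < t) (hm : 0 < m) (hℓ : 0 < ℓ)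
    (X : Set (Fin t → ZMod q)) (f : Fin m → (Fin t → ZMod q) → ZMod q)
    (σ : Fin (2 * ℓ) → ZMod q) (hσ : ∀ i, σ i ≠ 0) (lam : Fin m → ZMod q) :
    Nat.card {x : Fin (2 * ℓ) → (Fin t → ZMod q) //
        (∀ i, x i ∈ X) ∧ ∀ j, ∑ i, σ i * f j (x i) = lam j} ≤
    Nat.card {x : Fin (2 * ℓ) → (Fin t → ZMod q) //
        (∀ i, x i ∈ X) ∧ ∀ j, ∑ i : Fin (2 * ℓ), (-1 : ZMod q) ^ (i.val + 1) * f j (x i) = 0} := by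
  classical
  haveI : NeZero q := ⟨hq.pos.ne'⟩
  haveI := Fact.mk hq
  obtain ⟨N1, hN1⟩ : ∃ n : ℕ, n = Nat.card {x : Fin (2 * ℓ) → (Fin t → ZMod q) //
      (∀ i, x i ∈ X) ∧ ∀ j, ∑ i, σ i * f j (x i) = lam j} := ⟨_, rfl⟩
  obtain ⟨N2, hN2⟩ : ∃ n : ℕ, n = Nat.card {x : Fin (2 * ℓ) → (Fin t → ZMod q) //
      (∀ i, x i ∈ X) ∧ ∀ j, ∑ i : Fin (2 * ℓ), (-1 : ZMod q) ^ (i.val + 1) * f j (x i) = 0}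
      := ⟨_, rfl⟩
  rw [← hN1, ← hN2]
  obtain ⟨A, hA⟩ : ∃ A : ℝ, A = ∑ η : Fin m → ZMod q,
      (‖Tf q t m X f η‖) ^ (2 * ℓ) := ⟨_, rfl⟩
  have hn0 : (2 * ℓ) ≠ 0 := Nat.mul_ne_zero two_ne_zero hℓ.ne'
  -- the alternating count equals A / q^m
  have h2 : (q : ℝ)^m * (N2 : ℝ) = A := by
    have hcount := count_eq q t m X f (fun i : Fin (2 * ℓ) => (-1 : ZMod q) ^ (i.val + 1))
      (fun _ => (0 : ZMod q))
    simp only [mul_zero, Finset.sum_const_zero, neg_zero, AddChar.map_zero_eq_one,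
      mul_one] at hcount
    have hA' : (A : ℂ) = ∑ η : Fin m → ZMod q,
        (∏ i : Fin (2 * ℓ), Tf q t m X f (((-1 : ZMod q) ^ (i.val + 1)) • η)) := by
      rw [hA, Complex.ofReal_sum]
      exact Finset.sum_congr rfl fun η _ => (alt_sum q t m ℓ X f η).symm
    have hc2 : (A : ℂ) = (q : ℂ)^m * (N2 : ℂ) := by
      rw [hN2]
      exact_mod_cast hA'.trans hcount
    exact_mod_cast hc2.symm
  -- the σ-count is bounded by A / q^m
  have h1 : (q : ℝ)^m * (N1 : ℝ) ≤ A := by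
    have hcount := count_eq q t m X f σ lam
    have habs := congrArg (fun z : ℂ => ‖z‖) hcount
    rw [norm_mul, norm_pow, Complex.norm_natCast, Complex.norm_natCast, ← hN1] at habs
    have hstep : ‖(∑ η : Fin m → ZMod q, (∏ i, Tf q t m X f (σ i • η)) *
          ZMod.stdAddChar (-∑ j, η j * lam j))‖
        ≤ ∑ η : Fin m → ZMod q, ∏ i, ‖Tf q t m X f (σ i • η)‖ := by
      refine (norm_sum_le _ _).trans (le_of_eq ?_)
      refine Finset.sum_congr rfl fun η _ => ?_
      rw [norm_mul, stdAddChar_norm, mul_one, norm_prod]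
    have hAM : ∀ η : Fin m → ZMod q, ∏ i, ‖Tf q t m X f (σ i • η)‖
        ≤ (∑ i, ‖Tf q t m X f (σ i • η)‖ ^ (2 * ℓ)) / ((2 * ℓ : ℕ) : ℝ) :=
      fun η => amgm_pow hn0 _ (fun i => norm_nonneg _)
    have hre : ∀ i : Fin (2 * ℓ),
        ∑ η : Fin m → ZMod q, ‖Tf q t m X f (σ i • η)‖ ^ (2 * ℓ) = A := by
      intro i
      rw [hA]
      have hcomp := Equiv.sum_comp
        (Equiv.piCongrRight (fun _ : Fin m => Equiv.mulLeft₀ (σ i) (hσ i)))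
        (fun η => ‖Tf q t m X f η‖ ^ (2 * ℓ))
      rw [← hcomp]
      refine Finset.sum_congr rfl fun η _ => ?_
      have he : (Equiv.piCongrRight (fun _ : Fin m => Equiv.mulLeft₀ (σ i) (hσ i))) η
          = σ i • η := by
        funext j
        simp [Equiv.piCongrRight, Equiv.mulLeft₀, Pi.smul_apply, smul_eq_mul]
      rw [he]
    calc (q : ℝ)^m * (N1 : ℝ) = ‖(∑ η : Fin m → ZMod q,
            (∏ i, Tf q t m X f (σ i • η)) * ZMod.stdAddChar (-∑ j, η j * lam j))‖ := habs.symm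
      _ ≤ ∑ η : Fin m → ZMod q, ∏ i, ‖Tf q t m X f (σ i • η)‖ := hstep
      _ ≤ ∑ η : Fin m → ZMod q,
            (∑ i, ‖Tf q t m X f (σ i • η)‖ ^ (2 * ℓ)) / ((2 * ℓ : ℕ) : ℝ) :=
          Finset.sum_le_sum fun η _ => hAM η
      _ = (∑ i : Fin (2 * ℓ), ∑ η : Fin m → ZMod q,
            ‖Tf q t m X f (σ i • η)‖ ^ (2 * ℓ)) / ((2 * ℓ : ℕ) : ℝ) := by
          rw [← Finset.sum_div, Finset.sum_comm]
      _ = A := by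
          rw [Finset.sum_congr rfl (fun i _ => hre i), Finset.sum_const, Finset.card_univ,
            Fintype.card_fin, nsmul_eq_mul]
          have hne : ((2 * ℓ : ℕ) : ℝ) ≠ 0 := by exact_mod_cast hn0
          field_simp
  have hqm : (0 : ℝ) < (q : ℝ)^m := pow_pos (by exact_mod_cast hq.pos) m
  have : (N1 : ℝ) ≤ (N2 : ℝ) := by
    rw [← h2] at h1
    exact le_of_mul_le_mul_left h1 hqm
  exact_mod_cast this
end

section
/- Let q be prime, k, r, V positive integers with 1 ≤ m < k, r ≥ k(k+1)/2, and suppose V satisfies q^{1/m} ≪ V < q^{1/m}/r. Assume the main conjecture bound J_{r,k}(V) ≤ (1 + V^{r - k(k+1)/2}) V^{r+o(1)} for the integer Vinogradov system. Then the number J_{r,k}(V;q) of solutions of the congruence system v_1^j+⋯+v_r^j ≡ v_{r+1}^j+⋯+v_{2r}^j (mod q), j = 1,...,k, with 1 ≤ v_i ≤ V, satisfies J_{r,k}(V;q) ≤ V^{2r - km + m(m-1)/2 + o(1)}. -/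
open Finset

lemma natCard_subtype_eq_filter_card {α : Type*} [DecidableEq α] (s : Finset α)
    (P : α → Prop) [DecidablePred P] (h : ∀ x, P x → x ∈ s) :
    Nat.card {x // P x} = (s.filter P).card := by
  have h1 : {x | P x} = (↑(s.filter P) : Set α) := by
    ext x
    simp only [Set.mem_setOf_eq, Finset.coe_filter, Set.mem_setOf_eq]
    exact ⟨fun hp => ⟨h x hp, hp⟩, fun hp => hp.2⟩
  calc Nat.card {x // P x} = ({x | P x} : Set α).ncard := (Nat.card_coe_set_eq _).symm
    _ = _ := by rw [h1, Set.ncard_coe_finset]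

variable {α β : Type*} [DecidableEq β]

def fib (s : Finset α) (f : α → β) (b : β) : ℕ := (s.filter fun a => f a = b).card

lemma fib_eq_zero (s : Finset α) (f : α → β) (b : β) (hb : b ∉ s.image f) :
    fib s f b = 0 := by
  rw [fib, Finset.card_eq_zero, Finset.filter_eq_empty_iff]
  exact fun a ha hfa => hb (Finset.mem_image.mpr ⟨a, ha, hfa⟩)

lemma sum_comp_fib (s : Finset α) (f : α → β) (g : β → ℕ) :
    ∑ a ∈ s, g (f a) = ∑ b ∈ s.image f, fib s f b * g b := by
  rw [← Finset.sum_fiberwise_of_maps_to (fun a ha => Finset.mem_image_of_mem f ha)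
    (fun a => g (f a))]
  refine Finset.sum_congr rfl fun b _ => ?_
  rw [Finset.sum_congr rfl
    (fun a ha => by rw [(Finset.mem_filter.mp ha).2] :
      ∀ a ∈ filter (fun i => f i = b) s, g (f a) = g b),
    Finset.sum_const, smul_eq_mul]
  rfl

lemma card_shift_eq [AddCommGroup β] (s : Finset α) (f : α → β) (μ : β) [DecidableEq α] :
    ((s ×ˢ s).filter fun p => f p.1 = f p.2 + μ).card
      = ∑ b ∈ s.image f, fib s f b * fib s f (b - μ) := by
  rw [Finset.card_filter, Finset.sum_product]
  have inner : ∀ v ∈ s, (∑ w ∈ s, if f v = f w + μ then 1 else 0) = fib s f (f v - μ) := by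
    intro v _
    rw [fib, Finset.card_filter]
    refine Finset.sum_congr rfl fun w _ => ?_
    congr 1
    simp only [eq_iff_iff]
    constructor
    · intro h; rw [h]; abel
    · intro h; rw [h]; abel
  rw [Finset.sum_congr rfl inner, sum_comp_fib s f (fun b => fib s f (b - μ))]

lemma sum_fib_shift_sq_le [AddCommGroup β] (s : Finset α) (f : α → β) (μ : β) :
    ∑ b ∈ s.image f, fib s f (b - μ) ^ 2 ≤ ∑ b ∈ s.image f, fib s f b ^ 2 := by
  set T := s.image f
  calc ∑ b ∈ T, fib s f (b - μ) ^ 2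
      = ∑ b ∈ T.image (fun b => b - μ), fib s f b ^ 2 := by
        exact (Finset.sum_image (s := T) (g := fun b => b - μ)
          (f := fun b => fib s f b ^ 2)
          (fun x _ y _ h => by simpa [sub_left_inj] using h)).symm
    _ ≤ ∑ b ∈ T.image (fun b => b - μ) ∪ T, fib s f b ^ 2 :=
        Finset.sum_le_sum_of_subset Finset.subset_union_left
    _ = ∑ b ∈ T, fib s f b ^ 2 := by
        refine (Finset.sum_subset Finset.subset_union_right fun b _ hb => ?_).symm
        rw [fib_eq_zero s f b hb]; ring

lemma card_shift_le [AddCommGroup β] (s : Finset α) (f : α → β) (μ : β) [DecidableEq α] :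
    ((s ×ˢ s).filter fun p => f p.1 = f p.2 + μ).card
      ≤ ((s ×ˢ s).filter fun p => f p.1 = f p.2).card := by
  have h0 : ((s ×ˢ s).filter fun p => f p.1 = f p.2).card
      = ∑ b ∈ s.image f, fib s f b ^ 2 := by
    have := card_shift_eq s f (0 : β)
    simp only [add_zero, sub_zero] at this
    rw [this]; exact Finset.sum_congr rfl fun b _ => (sq (fib s f b)).symm
  rw [card_shift_eq s f μ, h0]
  -- Cauchy-Schwarz in ℕ
  have cs := Finset.sum_mul_sq_le_sq_mul_sq (s.image f) (fun b => fib s f b)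
    (fun b => fib s f (b - μ))
  have h2 := sum_fib_shift_sq_le s f μ
  set x := ∑ b ∈ s.image f, fib s f b * fib s f (b - μ)
  set A := ∑ b ∈ s.image f, fib s f b ^ 2
  set B := ∑ b ∈ s.image f, fib s f (b - μ) ^ 2
  have hx2 : x ^ 2 ≤ A * A := le_trans cs (Nat.mul_le_mul_left A h2)
  nlinarith [sq_nonneg (x - A)]

noncomputable def vbox (r V : ℕ) : Finset (Fin r → ℤ) := Fintype.piFinset fun _ => Finset.Icc 1 (V:ℤ)

lemma mem_box {r V : ℕ} {v : Fin r → ℤ} : v ∈ vbox r V ↔ ∀ i, 1 ≤ v i ∧ v i ≤ (V:ℤ) := by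
  simp [vbox, Fintype.mem_piFinset, Finset.mem_Icc]

noncomputable def vphi (k : ℕ) {r : ℕ} (v : Fin r → ℤ) : Fin k → ℤ :=
  fun j => ∑ i, v i ^ ((j:ℕ)+1)

lemma phi_bounds {k r V : ℕ} {v : Fin r → ℤ} (hv : v ∈ vbox r V) (j : Fin k) :
    (r:ℤ) ≤ vphi k v j ∧ vphi k v j ≤ (r:ℤ) * (V:ℤ)^((j:ℕ)+1) := by
  rw [mem_box] at hv
  constructor
  · calc (r:ℤ) = ∑ _i : Fin r, (1:ℤ) := by simp
      _ ≤ _ := Finset.sum_le_sum fun i _ => one_le_pow₀ (hv i).1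
  · calc vphi k v j ≤ ∑ _i : Fin r, (V:ℤ)^((j:ℕ)+1) :=
        Finset.sum_le_sum fun i _ => pow_le_pow_left₀ (by linarith [(hv i).1]) (hv i).2 _
      _ = (r:ℤ) * (V:ℤ)^((j:ℕ)+1) := by simp [mul_comm]

lemma forall_Icc_iff {k r : ℕ} (v w : Fin r → ℤ) :
    (∀ j ∈ Finset.Icc 1 k, ∑ i, v i ^ j = ∑ i, w i ^ j) ↔ vphi k v = vphi k w := by
  constructor
  · intro h; funext j
    exact h ((j:ℕ)+1) (Finset.mem_Icc.mpr ⟨Nat.le_add_left _ _, j.isLt⟩)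
  · intro h j hj
    obtain ⟨h1, h2⟩ := Finset.mem_Icc.mp hj
    have := congrFun h ⟨j-1, by omega⟩
    simpa [vphi, Nat.sub_add_cancel h1] using this

lemma forall_Icc_dvd_iff {k r q : ℕ} (v w : Fin r → ℤ) :
    (∀ j ∈ Finset.Icc 1 k, (q:ℤ) ∣ (∑ i, v i ^ j - ∑ i, w i ^ j)) ↔
      ∀ j : Fin k, (q:ℤ) ∣ (vphi k v j - vphi k w j) := by
  constructor
  · intro h j
    exact h ((j:ℕ)+1) (Finset.mem_Icc.mpr ⟨Nat.le_add_left _ _, j.isLt⟩)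
  · intro h j hj
    obtain ⟨h1, h2⟩ := Finset.mem_Icc.mp hj
    have := h ⟨j-1, by omega⟩
    simpa [vphi, Nat.sub_add_cancel h1] using this


lemma D_identity (k m : ℕ) (hmk : m ≤ k) :
    2 * (∑ j : Fin k, ((j:ℕ)+1-m)) + 2*k*m = m*(m-1) + k*(k+1) := by
  rw [Fin.sum_univ_eq_sum_range (fun j => j+1-m) k]
  induction k, hmk using Nat.le_induction with
  | base =>
    have h0 : ∑ j ∈ Finset.range m, (j+1-m) = 0 := Finset.sum_eq_zero fun j hj => by
      have := Finset.mem_range.mp hj; omega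
    rw [h0]
    cases m with
    | zero => simp
    | succ n => simp only [Nat.succ_sub_one]; ring
  | succ k hk ih =>
    rw [Finset.sum_range_succ]
    zify [hk, show m ≤ k + 1 by omega] at ih ⊢
    linarith

/-- The number of integer solutions of the Vinogradov system
`v₁^j + ⋯ + v_r^j = v_{r+1}^j + ⋯ + v_{2r}^j`, `j = 1, …, k`, with `1 ≤ vᵢ ≤ V`. -/
noncomputable def Jint (r k V : ℕ) : ℕ :=
  Nat.card {vw : (Fin r → ℤ) × (Fin r → ℤ) //
    (∀ i, 1 ≤ vw.1 i ∧ vw.1 i ≤ (V : ℤ)) ∧ (∀ i, 1 ≤ vw.2 i ∧ vw.2 i ≤ (V : ℤ)) ∧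
    (∀ j ∈ Finset.Icc 1 k, ∑ i, (vw.1 i) ^ j = ∑ i, (vw.2 i) ^ j)}

/-- The number of solutions of the corresponding congruence system modulo `q`. -/
noncomputable def Jcong (r k V q : ℕ) : ℕ :=
  Nat.card {vw : (Fin r → ℤ) × (Fin r → ℤ) //
    (∀ i, 1 ≤ vw.1 i ∧ vw.1 i ≤ (V : ℤ)) ∧ (∀ i, 1 ≤ vw.2 i ∧ vw.2 i ≤ (V : ℤ)) ∧
    (∀ j ∈ Finset.Icc 1 k, (q : ℤ) ∣ (∑ i, (vw.1 i) ^ j - ∑ i, (vw.2 i) ^ j))}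

lemma Jint_eq (r k V : ℕ) :
    Jint r k V = ((vbox r V ×ˢ vbox r V).filter
      fun p => vphi k p.1 = vphi k p.2).card := by
  rw [Jint, natCard_subtype_eq_filter_card (vbox r V ×ˢ vbox r V) _
    (fun x hx => Finset.mem_product.mpr ⟨mem_box.mpr hx.1, mem_box.mpr hx.2.1⟩)]
  congr 1
  refine Finset.filter_congr fun p hp => ?_
  obtain ⟨hp1, hp2⟩ := Finset.mem_product.mp hp
  rw [← forall_Icc_iff]
  exact ⟨fun h => h.2.2, fun h => ⟨mem_box.mp hp1, mem_box.mp hp2, h⟩⟩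

lemma Jcong_eq (r k V q : ℕ) :
    Jcong r k V q = ((vbox r V ×ˢ vbox r V).filter
      fun p => ∀ j : Fin k, (q:ℤ) ∣ (vphi k p.1 j - vphi k p.2 j)).card := by
  rw [Jcong, natCard_subtype_eq_filter_card (vbox r V ×ˢ vbox r V) _
    (fun x hx => Finset.mem_product.mpr ⟨mem_box.mpr hx.1, mem_box.mpr hx.2.1⟩)]
  congr 1
  refine Finset.filter_congr fun p hp => ?_
  obtain ⟨hp1, hp2⟩ := Finset.mem_product.mp hp
  rw [← forall_Icc_dvd_iff]
  exact ⟨fun h => h.2.2, fun h => ⟨mem_box.mp hp1, mem_box.mp hp2, h⟩⟩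

lemma master (k r m V q : ℕ) (hm : 1 ≤ m) (hr1 : 1 ≤ r) (hV : 1 ≤ V)
    (hq : (r*V)^m < q) :
    Jcong r k V q ≤ (3*r)^k * V^(∑ j : Fin k, ((j:ℕ)+1-m)) * Jint r k V := by
  classical
  have hq0 : 0 < q := lt_of_le_of_lt (Nat.zero_le _) hq
  have hqZ : (q:ℤ) ≠ 0 := by exact_mod_cast hq0.ne'
  set L : Fin k → ℤ := fun j => (r:ℤ) * (V:ℤ)^((j:ℕ)+1-m) with hL
  set Λ : Finset (Fin k → ℤ) := Fintype.piFinset fun j => Finset.Icc (-(L j)) (L j) with hΛ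
  set s := vbox r V ×ˢ vbox r V with hs
  -- the subset step
  have hsub : s.filter (fun p => ∀ j : Fin k, (q:ℤ) ∣ (vphi k p.1 j - vphi k p.2 j)) ⊆
      Λ.biUnion fun μ => s.filter fun p => vphi k p.1 = vphi k p.2 + (q:ℤ) • μ := by
    intro p hp
    rw [Finset.mem_filter] at hp
    obtain ⟨hps, hdvd⟩ := hp
    obtain ⟨hp1, hp2⟩ := Finset.mem_product.mp hps
    set μ : Fin k → ℤ := fun j => (vphi k p.1 j - vphi k p.2 j) / q with hμdef
    have hd : ∀ j, (q:ℤ) * μ j = vphi k p.1 j - vphi k p.2 j :=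
      fun j => Int.mul_ediv_cancel' (hdvd j)
    refine Finset.mem_biUnion.mpr ⟨μ, ?_, ?_⟩
    · rw [hΛ, Fintype.mem_piFinset]
      intro j
      rw [Finset.mem_Icc, ← abs_le]
      have hb1 := phi_bounds hp1 j
      have hb2 := phi_bounds hp2 j
      have habs : |vphi k p.1 j - vphi k p.2 j| ≤ (r:ℤ) * (V:ℤ)^((j:ℕ)+1) - r := by
        rw [abs_le]; constructor <;> linarith [hb1.1, hb1.2, hb2.1, hb2.2]
      have hVpos : (0:ℤ) < (V:ℤ) := by exact_mod_cast hV
      have hrpos : (0:ℤ) < (r:ℤ) := by exact_mod_cast hr1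
      by_cases hjm : (j:ℕ)+1 ≤ m
      · -- forced zero
        have hlt : |vphi k p.1 j - vphi k p.2 j| < q := by
          have h1 : (r:ℤ) * (V:ℤ)^((j:ℕ)+1) ≤ ((r:ℤ)*(V:ℤ))^m := by
            calc (r:ℤ) * (V:ℤ)^((j:ℕ)+1) ≤ (r:ℤ)^m * (V:ℤ)^m := by
                  apply mul_le_mul (le_self_pow₀ (by exact_mod_cast hr1) (by omega))
                    (pow_le_pow_right₀ (by exact_mod_cast hV) hjm)
                    (by positivity) (by positivity)
              _ = ((r:ℤ)*(V:ℤ))^m := (mul_pow _ _ _).symm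
          have h2 : ((r:ℤ)*(V:ℤ))^m < q := by exact_mod_cast hq
          linarith
        have : vphi k p.1 j - vphi k p.2 j = 0 := by
          by_contra hne
          have := Int.le_of_dvd (abs_pos.mpr hne) ((dvd_abs _ _).mpr (hdvd j))
          omega
        have : μ j = 0 := by rw [hμdef]; simp [this]
        rw [this]
        simp only [abs_zero]
        positivity
      · -- large j
        push_neg at hjm
        have hqVm : ((V:ℤ))^m < q := by
          have : (V:ℤ)^m ≤ ((r:ℤ)*(V:ℤ))^m := by
            apply pow_le_pow_left₀ (by positivity)
            nlinarith
          have h2 : ((r:ℤ)*(V:ℤ))^m < q := by exact_mod_cast hq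
          linarith
        have hsplit : ((j:ℕ)+1) = ((j:ℕ)+1-m) + m := by omega
        have key : |μ j| * (V:ℤ)^m < ((r:ℤ) * (V:ℤ)^((j:ℕ)+1-m)) * (V:ℤ)^m := by
          calc |μ j| * (V:ℤ)^m ≤ |μ j| * (q:ℤ) := by
                apply mul_le_mul_of_nonneg_left (le_of_lt hqVm) (abs_nonneg _)
            _ = |(q:ℤ) * μ j| := by rw [abs_mul, abs_of_nonneg (by positivity : (0:ℤ) ≤ (q:ℤ))]; ring
            _ = |vphi k p.1 j - vphi k p.2 j| := by rw [hd j]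
            _ ≤ (r:ℤ) * (V:ℤ)^((j:ℕ)+1) - r := habs
            _ < (r:ℤ) * (V:ℤ)^((j:ℕ)+1) := by linarith
            _ = ((r:ℤ) * (V:ℤ)^((j:ℕ)+1-m)) * (V:ℤ)^m := by
                rw [mul_assoc, ← pow_add, Nat.sub_add_cancel (le_of_lt hjm)]
        have := lt_of_mul_lt_mul_right key (by positivity : (0:ℤ) ≤ (V:ℤ)^m)
        rw [hL]
        exact le_of_lt this
    · rw [Finset.mem_filter]
      refine ⟨hps, funext fun j => ?_⟩
      have := hd j
      simp only [Pi.add_apply, Pi.smul_apply, smul_eq_mul]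
      linarith
  -- cardinal chain
  have hΛcard : Λ.card ≤ (3*r)^k * V^(∑ j : Fin k, ((j:ℕ)+1-m)) := by
    rw [hΛ, Fintype.card_piFinset]
    have hbd : ∀ j : Fin k, (Finset.Icc (-(L j)) (L j)).card ≤ 3*r*V^((j:ℕ)+1-m) := by
      intro j
      have h1 : (1:ℕ) ≤ r * V^((j:ℕ)+1-m) := Nat.one_le_iff_ne_zero.mpr (by positivity)
      have hcast : L j = ((r * V^((j:ℕ)+1-m) : ℕ) : ℤ) := by rw [hL]; push_cast; ring
      rw [Int.card_Icc, hcast]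
      calc (((r * V^((j:ℕ)+1-m) : ℕ) : ℤ) + 1 - -((r * V^((j:ℕ)+1-m) : ℕ) : ℤ)).toNat
          = 2 * (r * V^((j:ℕ)+1-m)) + 1 := by omega
        _ ≤ 3 * (r * V^((j:ℕ)+1-m)) := by omega
        _ = 3 * r * V^((j:ℕ)+1-m) := (mul_assoc _ _ _).symm
    calc ∏ j : Fin k, (Finset.Icc (-(L j)) (L j)).card
        ≤ ∏ j : Fin k, 3*r*V^((j:ℕ)+1-m) := Finset.prod_le_prod (fun _ _ => Nat.zero_le _) (fun j _ => hbd j)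
      _ = (3*r)^k * V^(∑ j : Fin k, ((j:ℕ)+1-m)) := by
          rw [Finset.prod_mul_distrib, Finset.prod_const, Finset.card_univ, Fintype.card_fin,
            Finset.prod_pow_eq_pow_sum]
  calc Jcong r k V q
      = (s.filter fun p => ∀ j : Fin k, (q:ℤ) ∣ (vphi k p.1 j - vphi k p.2 j)).card :=
        Jcong_eq r k V q
    _ ≤ (Λ.biUnion fun μ => s.filter fun p => vphi k p.1 = vphi k p.2 + (q:ℤ) • μ).card :=
        Finset.card_le_card hsub
    _ ≤ ∑ μ ∈ Λ, (s.filter fun p => vphi k p.1 = vphi k p.2 + (q:ℤ) • μ).card :=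
        Finset.card_biUnion_le
    _ ≤ ∑ _μ ∈ Λ, Jint r k V := by
        refine Finset.sum_le_sum fun μ _ => ?_
        rw [Jint_eq]
        exact card_shift_le (vbox r V) (vphi k) ((q:ℤ) • μ)
    _ = Λ.card * Jint r k V := by rw [Finset.sum_const, smul_eq_mul]
    _ ≤ (3*r)^k * V^(∑ j : Fin k, ((j:ℕ)+1-m)) * Jint r k V :=
        Nat.mul_le_mul_right _ hΛcard

theorem stmt_2 (k r m : ℕ) (hk : 0 < k) (hm : 1 ≤ m) (hmk : m < k)
    (hr : k * (k + 1) / 2 ≤ r)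
    (hmain : ∀ ε : ℝ, 0 < ε → ∃ C : ℝ, 0 < C ∧ ∀ V : ℕ, 0 < V →
      (Jint r k V : ℝ) ≤ C * (1 + (V : ℝ) ^ ((r : ℝ) - k * (k + 1) / 2)) * (V : ℝ) ^ ((r : ℝ) + ε))
    (c : ℝ) (hc : 0 < c) :
    ∀ ε : ℝ, 0 < ε → ∃ C : ℝ, 0 < C ∧ ∀ q V : ℕ, q.Prime → 0 < V →
      c * (q : ℝ) ^ ((1 : ℝ) / m) ≤ (V : ℝ) → (V : ℝ) < (q : ℝ) ^ ((1 : ℝ) / m) / r →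
      (Jcong r k V q : ℝ) ≤
        C * (V : ℝ) ^ (2 * (r : ℝ) - k * m + m * (m - 1) / 2 + ε) := by
  intro ε hε
  obtain ⟨C₀, hC₀pos, hC₀⟩ := hmain (ε/2) (by linarith)
  have hk2 : 2 ≤ k := by omega
  have hr1 : 1 ≤ r := by
    have h3 : 2 * 3 / 2 ≤ k*(k+1)/2 := Nat.div_le_div_right (by nlinarith)
    omega
  refine ⟨(3*(r:ℝ))^k * (2*C₀), by positivity, ?_⟩
  intro q V hqp hV h1 h2
  have hrR : (0:ℝ) < (r:ℝ) := by exact_mod_cast hr1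
  have hq0 : (0:ℝ) ≤ (q:ℝ) := Nat.cast_nonneg q
  have hV1 : (1:ℝ) ≤ (V:ℝ) := by exact_mod_cast hV
  have hVpos : (0:ℝ) < (V:ℝ) := by linarith
  -- derive (r*V)^m < q
  have hrV : ((r:ℝ)) * (V:ℝ) < (q:ℝ) ^ ((1:ℝ)/m) := by
    have := (lt_div_iff₀ hrR).mp h2
    linarith [this]
  have hq1 : (r*V)^m < q := by
    have h3 : (((r*V)^m : ℕ):ℝ) < (q:ℝ) := by
      push_cast
      calc ((r:ℝ)*(V:ℝ))^m < ((q:ℝ) ^ ((1:ℝ)/m))^m := by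
            apply pow_lt_pow_left₀ hrV (by positivity) (by omega)
        _ = q := by
            rw [← Real.rpow_natCast ((q:ℝ)^((1:ℝ)/m)) m, ← Real.rpow_mul hq0,
              one_div_mul_cancel (by exact_mod_cast (by omega : m ≠ 0)), Real.rpow_one]
    exact_mod_cast h3
  have hmaster := master k r m V q hm hr1 hV hq1
  set D : ℕ := ∑ j : Fin k, ((j:ℕ)+1-m) with hDdef
  -- real versions of arithmetic facts
  have hD : 2*(D:ℝ) + 2*(k:ℝ)*(m:ℝ) = (m:ℝ)*((m:ℝ)-1) + (k:ℝ)*((k:ℝ)+1) := by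
    have h4 := D_identity k m (le_of_lt hmk)
    have h5 : ((2 * D + 2*k*m : ℕ):ℝ) = ((m*(m-1) + k*(k+1) : ℕ):ℝ) := by
      rw [hDdef]; exact_mod_cast congrArg (Nat.cast : ℕ → ℝ) h4
    push_cast [Nat.cast_sub hm] at h5
    linarith
  have hrK : (k:ℝ)*((k:ℝ)+1)/2 ≤ (r:ℝ) := by
    have h2d : 2 ∣ k*(k+1) := (Nat.even_mul_succ_self k).two_dvd
    have h6 : k*(k+1) ≤ 2*r := by omega
    have h7 : (k:ℝ)*((k:ℝ)+1) ≤ 2*(r:ℝ) := by exact_mod_cast h6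
    linarith
  -- bound Jint
  have hone : (1:ℝ) ≤ (V:ℝ)^((r:ℝ) - (k:ℝ)*((k:ℝ)+1)/2) := by
    have := Real.rpow_le_rpow_of_exponent_le hV1
      (show (0:ℝ) ≤ (r:ℝ) - (k:ℝ)*((k:ℝ)+1)/2 by linarith)
    rwa [Real.rpow_zero] at this
  have hJ : (Jint r k V : ℝ) ≤ 2*C₀ * (V:ℝ)^(((r:ℝ) - (k:ℝ)*((k:ℝ)+1)/2) + ((r:ℝ) + ε/2)) := by
    have h8 := hC₀ V hV
    have h9 : C₀ * (1 + (V:ℝ)^((r:ℝ) - (k:ℝ)*((k:ℝ)+1)/2)) * (V:ℝ)^((r:ℝ) + ε/2)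
        ≤ 2*C₀ * (V:ℝ)^(((r:ℝ) - (k:ℝ)*((k:ℝ)+1)/2) + ((r:ℝ) + ε/2)) := by
      rw [Real.rpow_add hVpos ((r:ℝ) - (k:ℝ)*((k:ℝ)+1)/2) ((r:ℝ) + ε/2)]
      have h10 : (0:ℝ) < (V:ℝ)^((r:ℝ) + ε/2) := Real.rpow_pos_of_pos hVpos _
      nlinarith [Real.rpow_pos_of_pos hVpos ((r:ℝ) - (k:ℝ)*((k:ℝ)+1)/2)]
    calc (Jint r k V : ℝ)
        ≤ C₀ * (1 + (V:ℝ)^((r:ℝ) - (k:ℝ)*((k:ℝ)+1)/2)) * (V:ℝ)^((r:ℝ) + ε/2) := by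
          convert h8 using 4 <;> push_cast <;> ring
      _ ≤ _ := h9
  -- assemble
  have hcast : (Jcong r k V q : ℝ) ≤ (3*(r:ℝ))^k * (V:ℝ)^(D:ℕ) * (Jint r k V : ℝ) := by
    exact_mod_cast Nat.cast_le.mpr hmaster
  calc (Jcong r k V q : ℝ)
      ≤ (3*(r:ℝ))^k * (V:ℝ)^(D:ℕ) * (Jint r k V : ℝ) := hcast
    _ ≤ (3*(r:ℝ))^k * (V:ℝ)^(D:ℕ) *
        (2*C₀ * (V:ℝ)^(((r:ℝ) - (k:ℝ)*((k:ℝ)+1)/2) + ((r:ℝ) + ε/2))) := by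
        apply mul_le_mul_of_nonneg_left hJ (by positivity)
    _ = (3*(r:ℝ))^k * (2*C₀) *
        ((V:ℝ)^((D:ℝ) + (((r:ℝ) - (k:ℝ)*((k:ℝ)+1)/2) + ((r:ℝ) + ε/2)))) := by
        rw [Real.rpow_add hVpos (D:ℝ) (((r:ℝ) - (k:ℝ)*((k:ℝ)+1)/2) + ((r:ℝ) + ε/2)),
          Real.rpow_natCast (V:ℝ) D]
        ring
    _ ≤ (3*(r:ℝ))^k * (2*C₀) * (V:ℝ)^(2 * (r:ℝ) - (k:ℝ)*(m:ℝ) + (m:ℝ)*((m:ℝ)-1)/2 + ε) := by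
        apply mul_le_mul_of_nonneg_left _ (by positivity)
        exact Real.rpow_le_rpow_of_exponent_le hV1 (by linarith)
end

section
/- Let q be prime and let M, N, U be integers with NU ≤ q and 1 ≤ U ≤ N. Then the number of quadruples (n_1, n_2, u_1, u_2) with M < n_1, n_2 ≤ M+N, 1 ≤ u_1, u_2 ≤ U, and n_1 u_1 ≡ n_2 u_2 (mod q), is O(NU log q). -/
lemma card_pairwise_dvd {S : Finset ℤ} {a b : ℤ} {v : ℕ} (hv : 0 < v)
    (hS : S ⊆ Finset.Icc a b) (hd : ∀ x ∈ S, ∀ y ∈ S, (v:ℤ) ∣ x - y) :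
    S.card ≤ (b - a).toNat / v + 1 := by
  classical
  have key : ∀ x ∈ S, ∀ y ∈ S, x < y →
      (x - a).toNat / v < (y - a).toNat / v := by
    intro x hx y hy hxy
    have hax : a ≤ x := (Finset.mem_Icc.mp (hS hx)).1
    have hay : a ≤ y := (Finset.mem_Icc.mp (hS hy)).1
    have hdvd : (v:ℤ) ∣ y - x := hd y hy x hx
    have hvle : (v:ℤ) ≤ y - x := Int.le_of_dvd (by omega) hdvd
    have h1 : (y - a).toNat = (x - a).toNat + (y - x).toNat := by omega
    have h2 : v ≤ (y - x).toNat := by omega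
    calc (x - a).toNat / v < (x - a).toNat / v + 1 := Nat.lt_succ_self _
      _ = ((x - a).toNat + v) / v := by rw [Nat.add_div_right _ hv]
      _ ≤ ((x - a).toNat + (y - x).toNat) / v := Nat.div_le_div_right (by omega)
      _ = (y - a).toNat / v := by rw [h1]
  have := Finset.card_le_card_of_injOn (s := S) (t := Finset.range ((b - a).toNat / v + 1))
    (fun x => (x - a).toNat / v) ?_ ?_
  · simpa using this
  · intro x hx
    simp only [Finset.mem_range]
    have hx' := Finset.mem_Icc.mp (hS hx)
    have : (x - a).toNat ≤ (b - a).toNat := by omega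
    exact Finset.mem_coe.mpr (Finset.mem_range.mpr (Nat.lt_succ_of_le (Nat.div_le_div_right this)))
  · intro x hx y hy hxy
    by_contra hne
    rcases lt_or_gt_of_ne hne with h | h
    · exact absurd hxy (Nat.ne_of_lt (key x hx y hy h))
    · exact absurd hxy.symm (Nat.ne_of_lt (key y hy x hx h))


lemma sum_half (W : ℕ) :
    ∑ p ∈ Finset.Icc 1 W ×ˢ Finset.Icc 1 W, (if p.2 ≤ p.1 then (1:ℝ)/p.1 else 0) ≤ W := by
  rw [Finset.sum_product]
  have : ∀ w1 ∈ Finset.Icc 1 W,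
      (∑ w2 ∈ Finset.Icc 1 W, (if w2 ≤ w1 then (1:ℝ)/w1 else 0)) ≤ 1 := by
    intro w1 hw1
    simp only [Finset.mem_Icc] at hw1
    rw [← Finset.sum_filter]
    rw [Finset.sum_const]
    have hcard : ((Finset.Icc 1 W).filter (fun w2 => w2 ≤ w1)).card ≤ w1 := by
      have : (Finset.Icc 1 W).filter (fun w2 => w2 ≤ w1) ⊆ Finset.Icc 1 w1 := by
        intro x hx
        simp only [Finset.mem_filter, Finset.mem_Icc] at hx ⊢
        omega
      simpa [Nat.card_Icc] using Finset.card_le_card this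
    have h1 : (0:ℝ) < w1 := by exact_mod_cast hw1.1
    rw [nsmul_eq_mul]
    have hc : ((((Finset.Icc 1 W).filter (fun a => a ≤ w1))).card : ℝ) ≤ (w1:ℝ) := by
      exact_mod_cast hcard
    have h2 := mul_le_mul_of_nonneg_right hc (show (0:ℝ) ≤ 1/(w1:ℝ) by positivity)
    have h3 : (w1:ℝ) * (1/(w1:ℝ)) = 1 := by field_simp
    linarith
  calc ∑ w1 ∈ Finset.Icc 1 W, ∑ w2 ∈ Finset.Icc 1 W, (if w2 ≤ w1 then (1:ℝ)/w1 else 0)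
      ≤ ∑ w1 ∈ Finset.Icc 1 W, (1:ℝ) := Finset.sum_le_sum this
    _ = W := by simp [Nat.card_Icc]

lemma sum_inv_max (W : ℕ) :
    ∑ p ∈ Finset.Icc 1 W ×ˢ Finset.Icc 1 W, (1:ℝ) / (max p.1 p.2) ≤ 2 * W := by
  have hbound : ∀ p ∈ Finset.Icc 1 W ×ˢ Finset.Icc 1 W, (1:ℝ) / (max p.1 p.2) ≤
      (if p.2 ≤ p.1 then (1:ℝ)/p.1 else 0) + (if p.1 ≤ p.2 then (1:ℝ)/p.2 else 0) := by
    rintro ⟨w1, w2⟩ hp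
    simp only [Finset.mem_product, Finset.mem_Icc] at hp
    rcases le_total w2 w1 with h | h
    · have hm : max w1 w2 = w1 := max_eq_left h
      rw [hm, if_pos h]
      have : (0:ℝ) ≤ (if w1 ≤ w2 then (1:ℝ)/w2 else 0) := by positivity
      linarith
    · have hm : max w1 w2 = w2 := max_eq_right h
      rw [hm, if_pos h]
      have : (0:ℝ) ≤ (if w2 ≤ w1 then (1:ℝ)/w1 else 0) := by positivity
      linarith
  have hswap : ∑ p ∈ Finset.Icc 1 W ×ˢ Finset.Icc 1 W, (if p.1 ≤ p.2 then (1:ℝ)/p.2 else 0)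
      = ∑ p ∈ Finset.Icc 1 W ×ˢ Finset.Icc 1 W, (if p.2 ≤ p.1 then (1:ℝ)/p.1 else 0) := by
    rw [Finset.sum_product, Finset.sum_product]
    exact Finset.sum_comm
  calc ∑ p ∈ Finset.Icc 1 W ×ˢ Finset.Icc 1 W, (1:ℝ) / (max p.1 p.2)
      ≤ ∑ p ∈ Finset.Icc 1 W ×ˢ Finset.Icc 1 W,
        ((if p.2 ≤ p.1 then (1:ℝ)/p.1 else 0) + (if p.1 ≤ p.2 then (1:ℝ)/p.2 else 0)) :=
        Finset.sum_le_sum hbound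
    _ = (∑ p ∈ Finset.Icc 1 W ×ˢ Finset.Icc 1 W, (if p.2 ≤ p.1 then (1:ℝ)/p.1 else 0))
        + (∑ p ∈ Finset.Icc 1 W ×ˢ Finset.Icc 1 W, (if p.1 ≤ p.2 then (1:ℝ)/p.2 else 0)) :=
        Finset.sum_add_distrib
    _ ≤ W + W := by rw [hswap]; have := sum_half W; linarith
    _ = 2 * W := by ring

lemma fiber_bound {v u : ℕ} (hv : 0 < v) (hcop : Nat.Coprime u v) (M : ℤ) (N : ℕ)
    (s : ℤ) (F : Finset (ℤ × ℤ))
    (hF : ∀ p ∈ F, p.1 ∈ Finset.Icc (M+1) (M+(N:ℤ)) ∧ p.2 ∈ Finset.Icc (M+1) (M+(N:ℤ)) ∧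
      p.1 * u - p.2 * v = s) :
    F.card ≤ N / v + 1 := by
  classical
  have hinj : Set.InjOn (Prod.fst : ℤ × ℤ → ℤ) ↑F := by
    rintro ⟨x, y⟩ hp ⟨x', y'⟩ hp' (h : x = x')
    obtain ⟨_, _, h1⟩ := hF _ hp
    obtain ⟨_, _, h2⟩ := hF _ hp'
    have : y * v = y' * v := by rw [h] at h1; linarith
    have : y = y' := by
      have hv' : (v:ℤ) ≠ 0 := by exact_mod_cast hv.ne'
      exact mul_right_cancel₀ hv' this
    simp [h, this]
  have hcard : F.card = (F.image Prod.fst).card := (Finset.card_image_of_injOn hinj).symm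
  rw [hcard]
  have hsub : F.image Prod.fst ⊆ Finset.Icc (M+1) (M+(N:ℤ)) := by
    intro x hx
    obtain ⟨p, hp, rfl⟩ := Finset.mem_image.mp hx
    exact (hF p hp).1
  have hdvd : ∀ x ∈ F.image Prod.fst, ∀ y ∈ F.image Prod.fst, (v:ℤ) ∣ x - y := by
    intro x hx y hy
    obtain ⟨p, hp, rfl⟩ := Finset.mem_image.mp hx
    obtain ⟨p', hp', rfl⟩ := Finset.mem_image.mp hy
    obtain ⟨_, _, h1⟩ := hF _ hp
    obtain ⟨_, _, h2⟩ := hF _ hp'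
    have hmul : (v:ℤ) ∣ (u:ℤ) * (p.1 - p'.1) := ⟨p.2 - p'.2, by linear_combination h1 - h2⟩
    have hcop' : IsCoprime (v:ℤ) (u:ℤ) := by
      rw [Int.isCoprime_iff_gcd_eq_one]
      simpa [Int.gcd_natCast_natCast] using hcop.symm
    exact hcop'.dvd_of_dvd_mul_left hmul
  have := card_pairwise_dvd hv hsub hdvd
  have harith : ((M+(N:ℤ)) - (M+1)).toNat / v ≤ N / v := by
    apply Nat.div_le_div_right
    omega
  omega

lemma inner_count {q N U : ℕ} (hq : q.Prime) (hNU : N * U ≤ q) (hU1 : 1 ≤ U) (hUN : U ≤ N)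
    {b1 b2 : ℕ} (hb1 : 1 ≤ b1) (hb1U : b1 ≤ U) (hb2 : 1 ≤ b2) (hb2U : b2 ≤ U) (M : ℤ) :
    ((Finset.Icc (M+1) (M+(N:ℤ)) ×ˢ Finset.Icc (M+1) (M+(N:ℤ))).filter
      (fun p : ℤ × ℤ => (q:ℤ) ∣ (p.1 * b1 - p.2 * b2))).card
      ≤ 2 * (N / (max (b1 / Nat.gcd b1 b2) (b2 / Nat.gcd b1 b2)) + 1) := by
  classical
  set g := Nat.gcd b1 b2 with hgdef
  have hg : 0 < g := Nat.gcd_pos_of_pos_left _ (by omega)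
  set w1 := b1 / g with hw1def
  set w2 := b2 / g with hw2def
  have hb1w : g * w1 = b1 := Nat.mul_div_cancel' (Nat.gcd_dvd_left _ _)
  have hb2w : g * w2 = b2 := Nat.mul_div_cancel' (Nat.gcd_dvd_right _ _)
  have hw1ne : w1 ≠ 0 := by intro h; rw [h, mul_zero] at hb1w; omega
  have hw2ne : w2 ≠ 0 := by intro h; rw [h, mul_zero] at hb2w; omega
  have hw1pos : 0 < w1 := Nat.pos_of_ne_zero hw1ne
  have hw2pos : 0 < w2 := Nat.pos_of_ne_zero hw2ne
  have hw1U : w1 ≤ U := le_trans (Nat.div_le_self _ _) hb1U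
  have hw2U : w2 ≤ U := le_trans (Nat.div_le_self _ _) hb2U
  have hcop : Nat.Coprime w1 w2 := Nat.coprime_div_gcd_div_gcd hg
  have hq2 := hq.two_le
  have hqpos : 0 < q := by omega
  have hUq : U < q := by
    have hUU : U * U ≤ q := le_trans (Nat.mul_le_mul_right _ hUN) hNU
    nlinarith
  have hgU : g ≤ U := le_trans (Nat.le_of_dvd (by omega) (Nat.gcd_dvd_left _ _)) hb1U
  have hqg : IsCoprime (q:ℤ) (g:ℤ) := by
    rw [Int.isCoprime_iff_gcd_eq_one]
    have : Nat.Coprime q g := (hq.coprime_iff_not_dvd).mpr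
      (fun hdvd => by have := Nat.le_of_dvd hg hdvd; omega)
    simpa [Int.gcd_natCast_natCast] using this
  have hfactor : ∀ p : ℤ × ℤ, p.1 * (b1:ℤ) - p.2 * (b2:ℤ) =
      (g:ℤ) * (p.1 * w1 - p.2 * w2) := by
    intro p
    have e1 : (b1:ℤ) = (g:ℤ) * w1 := by exact_mod_cast hb1w.symm
    have e2 : (b2:ℤ) = (g:ℤ) * w2 := by exact_mod_cast hb2w.symm
    rw [e1, e2]; ring
  have hiff : ∀ p : ℤ × ℤ, ((q:ℤ) ∣ (p.1 * b1 - p.2 * b2)) ↔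
      ((q:ℤ) ∣ (p.1 * w1 - p.2 * w2)) := by
    intro p
    rw [hfactor p]
    constructor
    · intro h
      exact hqg.dvd_of_dvd_mul_left h
    · intro h
      exact Dvd.dvd.mul_left h _
  set B : Finset (ℤ × ℤ) := Finset.Icc (M+1) (M+(N:ℤ)) ×ˢ Finset.Icc (M+1) (M+(N:ℤ)) with hB
  have hSrw : (B.filter (fun p : ℤ × ℤ => (q:ℤ) ∣ (p.1 * b1 - p.2 * b2)))
      = B.filter (fun p : ℤ × ℤ => (q:ℤ) ∣ (p.1 * w1 - p.2 * w2)) := by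
    apply Finset.filter_congr
    intro p _
    simpa using hiff p
  rw [hSrw]
  set S := B.filter (fun p : ℤ × ℤ => (q:ℤ) ∣ (p.1 * w1 - p.2 * w2)) with hS
  set lo : ℤ := (M+1) * w1 - (M+(N:ℤ)) * w2 with hlo
  set hi : ℤ := (M+(N:ℤ)) * w1 - (M+1) * w2 with hhi
  set T : Finset ℤ := (Finset.Icc lo hi).filter (fun s : ℤ => (q:ℤ) ∣ s) with hT
  have hmaps : ∀ p ∈ S, p.1 * (w1:ℤ) - p.2 * w2 ∈ T := by
    intro p hp
    rw [hS, Finset.mem_filter, hB, Finset.mem_product, Finset.mem_Icc, Finset.mem_Icc] at hp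
    obtain ⟨⟨⟨h1, h2⟩, h3, h4⟩, h5⟩ := hp
    rw [hT, Finset.mem_filter, Finset.mem_Icc]
    have hw1nn : (0:ℤ) ≤ w1 := by positivity
    have hw2nn : (0:ℤ) ≤ w2 := by positivity
    refine ⟨⟨?_, ?_⟩, h5⟩
    · rw [hlo]
      have := mul_le_mul_of_nonneg_right h1 hw1nn
      have := mul_le_mul_of_nonneg_right h4 hw2nn
      linarith
    · rw [hhi]
      have := mul_le_mul_of_nonneg_right h2 hw1nn
      have := mul_le_mul_of_nonneg_right h3 hw2nn
      linarith
  have hTcard : T.card ≤ 2 := by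
    have hsub : T ⊆ Finset.Icc lo hi := Finset.filter_subset _ _
    have hdvd : ∀ x ∈ T, ∀ y ∈ T, (q:ℤ) ∣ x - y := by
      intro x hx y hy
      rw [hT, Finset.mem_filter] at hx hy
      exact dvd_sub hx.2 hy.2
    have := card_pairwise_dvd hqpos hsub hdvd
    have hlen : hi - lo ≤ 2 * q - 2 := by
      rw [hhi, hlo]
      have e : (M+(N:ℤ)) * w1 - (M+1) * w2 - ((M+1) * w1 - (M+(N:ℤ)) * w2)
          = ((N:ℤ) - 1) * ((w1:ℤ) + w2) := by ring
      rw [e]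
      have hNq : (N:ℤ) * U ≤ q := by exact_mod_cast hNU
      have hw1U' : (w1:ℤ) ≤ U := by exact_mod_cast hw1U
      have hw2U' : (w2:ℤ) ≤ U := by exact_mod_cast hw2U
      have hN1 : (1:ℤ) ≤ N := by exact_mod_cast le_trans hU1 hUN
      have hU1' : (1:ℤ) ≤ U := by exact_mod_cast hU1
      nlinarith
    have hlt : (hi - lo).toNat / q < 2 := by
      rw [Nat.div_lt_iff_lt_mul hqpos]
      omega
    omega
  have hfiber : ∀ s ∈ T, (S.filter (fun p : ℤ × ℤ => p.1 * (w1:ℤ) - p.2 * w2 = s)).card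
      ≤ N / max w1 w2 + 1 := by
    intro s _
    have hmem : ∀ p ∈ S.filter (fun p : ℤ × ℤ => p.1 * (w1:ℤ) - p.2 * w2 = s),
        p.1 ∈ Finset.Icc (M+1) (M+(N:ℤ)) ∧ p.2 ∈ Finset.Icc (M+1) (M+(N:ℤ)) ∧
        p.1 * (w1:ℤ) - p.2 * w2 = s := by
      intro p hp
      rw [Finset.mem_filter, hS, Finset.mem_filter, hB, Finset.mem_product] at hp
      exact ⟨hp.1.1.1, hp.1.1.2, hp.2⟩
    rcases le_total w1 w2 with h | h
    · rw [max_eq_right h]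
      exact fiber_bound hw2pos hcop M N s _ hmem
    · rw [max_eq_left h]
      set F := S.filter (fun p : ℤ × ℤ => p.1 * (w1:ℤ) - p.2 * w2 = s) with hF
      have hswap : F.card = (F.image Prod.swap).card :=
        (Finset.card_image_of_injective _ Prod.swap_injective).symm
      rw [hswap]
      apply fiber_bound hw1pos hcop.symm M N (-s)
      intro p hp
      obtain ⟨p', hp', rfl⟩ := Finset.mem_image.mp hp
      obtain ⟨h1, h2, h3⟩ := hmem p' hp'
      exact ⟨h2, h1, by simp; linarith⟩
  calc S.card = ∑ s ∈ T, (S.filter (fun p : ℤ × ℤ => p.1 * (w1:ℤ) - p.2 * w2 = s)).card :=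
        Finset.card_eq_sum_card_fiberwise hmaps
    _ ≤ ∑ _s ∈ T, (N / max w1 w2 + 1) := Finset.sum_le_sum hfiber
    _ = T.card * (N / max w1 w2 + 1) := by rw [Finset.sum_const, smul_eq_mul]
    _ ≤ 2 * (N / max w1 w2 + 1) := Nat.mul_le_mul_right _ hTcard

lemma sum_reindex (U d : ℕ) (hd : 1 ≤ d) :
    ∑ b ∈ Finset.Icc 1 U ×ˢ Finset.Icc 1 U,
      (if d ∣ b.1 ∧ d ∣ b.2 then (1:ℝ)/(max (b.1/d) (b.2/d)) else 0)
      ≤ 2 * ((U / d : ℕ) : ℝ) := by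
  classical
  rw [← Finset.sum_filter]
  have := sum_inv_max (U / d)
  have heq : ∑ b ∈ (Finset.Icc 1 U ×ˢ Finset.Icc 1 U).filter (fun b => d ∣ b.1 ∧ d ∣ b.2),
      (1:ℝ)/(max (b.1/d) (b.2/d))
      = ∑ p ∈ Finset.Icc 1 (U/d) ×ˢ Finset.Icc 1 (U/d), (1:ℝ) / (max p.1 p.2) := by
    apply Finset.sum_nbij' (fun b => (b.1 / d, b.2 / d)) (fun w => (d * w.1, d * w.2))
    · rintro ⟨b1, b2⟩ hb
      simp only [Finset.mem_filter, Finset.mem_product, Finset.mem_Icc] at hb ⊢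
      obtain ⟨⟨⟨h1, h2⟩, h3, h4⟩, h5, h6⟩ := hb
      refine ⟨⟨?_, Nat.div_le_div_right h2⟩, ?_, Nat.div_le_div_right h4⟩
      · rw [Nat.one_le_div_iff (by omega)]; exact Nat.le_of_dvd (by omega) h5
      · rw [Nat.one_le_div_iff (by omega)]; exact Nat.le_of_dvd (by omega) h6
    · rintro ⟨w1, w2⟩ hw
      simp only [Finset.mem_filter, Finset.mem_product, Finset.mem_Icc] at hw ⊢
      obtain ⟨⟨h1, h2⟩, h3, h4⟩ := hw
      refine ⟨⟨⟨Nat.mul_pos (by omega) (by omega), ?_⟩, Nat.mul_pos (by omega) (by omega), ?_⟩, ⟨w1, rfl⟩, ⟨w2, rfl⟩⟩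
      · exact (Nat.le_div_iff_mul_le (by omega)).mp h2 |>.trans_eq' (by ring_nf)
      · exact (Nat.le_div_iff_mul_le (by omega)).mp h4 |>.trans_eq' (by ring_nf)
    · rintro ⟨b1, b2⟩ hb
      simp only [Finset.mem_filter] at hb
      obtain ⟨_, h5, h6⟩ := hb
      simp [Nat.mul_div_cancel' h5, Nat.mul_div_cancel' h6]
    · rintro ⟨w1, w2⟩ _
      simp [Nat.mul_div_cancel_left _ (show 0 < d by omega)]
    · rintro ⟨b1, b2⟩ _
      rfl
  rw [heq]
  exact this.trans (by push_cast; linarith)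

lemma sum_one_div_le (U : ℕ) : ∑ d ∈ Finset.Icc 1 U, (1:ℝ)/d ≤ 1 + Real.log U := by
  have h := harmonic_le_one_add_log U
  rw [harmonic_eq_sum_Icc] at h
  have : ((∑ d ∈ Finset.Icc 1 U, (d:ℚ)⁻¹ : ℚ) : ℝ) = ∑ d ∈ Finset.Icc 1 U, (1:ℝ)/d := by
    push_cast
    simp [one_div]
  rw [this] at h
  exact h

theorem stmt_4 : ∃ C : ℝ, 0 < C ∧ ∀ (q N U : ℕ) (M : ℤ), q.Prime →
    N * U ≤ q → 1 ≤ U → U ≤ N →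
    (Nat.card {x : ℤ × ℤ × ℤ × ℤ //
        (M < x.1 ∧ x.1 ≤ M + N) ∧ (M < x.2.1 ∧ x.2.1 ≤ M + N) ∧
        (1 ≤ x.2.2.1 ∧ x.2.2.1 ≤ (U : ℤ)) ∧ (1 ≤ x.2.2.2 ∧ x.2.2.2 ≤ (U : ℤ)) ∧
        (q : ℤ) ∣ (x.1 * x.2.2.1 - x.2.1 * x.2.2.2)} : ℝ) ≤
      C * N * U * Real.log q := by
  classical
  refine ⟨16, by norm_num, ?_⟩
  intro q N U M hq hNU hU1 hUN
  have hq2 := hq.two_le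
  have hN1 : 1 ≤ N := le_trans hU1 hUN
  set B1 : Finset ℤ := Finset.Icc (M+1) (M+(N:ℤ)) with hB1
  set BU : Finset ℤ := Finset.Icc (1:ℤ) (U:ℤ) with hBU
  set F : Finset (ℤ×ℤ×ℤ×ℤ) := (B1 ×ˢ B1 ×ˢ BU ×ˢ BU).filter
    (fun x => (q:ℤ) ∣ (x.1 * x.2.2.1 - x.2.1 * x.2.2.2)) with hF
  -- Step 1 : Nat.card = F.card
  have hsetEq : {x : ℤ × ℤ × ℤ × ℤ |
      (M < x.1 ∧ x.1 ≤ M + N) ∧ (M < x.2.1 ∧ x.2.1 ≤ M + N) ∧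
      (1 ≤ x.2.2.1 ∧ x.2.2.1 ≤ (U : ℤ)) ∧ (1 ≤ x.2.2.2 ∧ x.2.2.2 ≤ (U : ℤ)) ∧
      (q : ℤ) ∣ (x.1 * x.2.2.1 - x.2.1 * x.2.2.2)} = (↑F : Set (ℤ×ℤ×ℤ×ℤ)) := by
    ext x
    simp only [hF, hB1, hBU, Finset.coe_filter, Finset.mem_product, Finset.mem_Icc,
      Set.mem_setOf_eq, Int.add_one_le_iff]
    tauto
  have hcardEq : Nat.card {x : ℤ × ℤ × ℤ × ℤ //
      (M < x.1 ∧ x.1 ≤ M + N) ∧ (M < x.2.1 ∧ x.2.1 ≤ M + N) ∧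
      (1 ≤ x.2.2.1 ∧ x.2.2.1 ≤ (U : ℤ)) ∧ (1 ≤ x.2.2.2 ∧ x.2.2.2 ≤ (U : ℤ)) ∧
      (q : ℤ) ∣ (x.1 * x.2.2.1 - x.2.1 * x.2.2.2)} = F.card := by
    rw [← Set.ncard_coe_finset, ← hsetEq]
    exact Nat.card_coe_set_eq _
  rw [hcardEq]
  -- Step 2 : fiber decomposition over pairs (u₁, u₂) as naturals
  set t : Finset (ℕ × ℕ) := Finset.Icc 1 U ×ˢ Finset.Icc 1 U with ht
  have hmapsto : ∀ x ∈ F, (x.2.2.1.toNat, x.2.2.2.toNat) ∈ t := by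
    intro x hx
    simp only [hF, Finset.mem_filter, Finset.mem_product] at hx
    obtain ⟨⟨_, _, h3, h4⟩, _⟩ := hx
    rw [hBU, Finset.mem_Icc] at h3 h4
    simp only [ht, Finset.mem_product, Finset.mem_Icc]
    omega
  have hdecomp := Finset.card_eq_sum_card_fiberwise hmapsto
  -- Step 3 : per-fiber bound
  have hfib : ∀ b ∈ t, (F.filter (fun x => (x.2.2.1.toNat, x.2.2.2.toNat) = b)).card ≤
      2 * (N / (max (b.1 / Nat.gcd b.1 b.2) (b.2 / Nat.gcd b.1 b.2)) + 1) := by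
    rintro ⟨b1, b2⟩ hb
    simp only [ht, Finset.mem_product, Finset.mem_Icc] at hb
    obtain ⟨⟨hb11, hb1U⟩, hb21, hb2U⟩ := hb
    have hval : ∀ x ∈ F.filter (fun x => (x.2.2.1.toNat, x.2.2.2.toNat) = (b1, b2)),
        x.2.2.1 = (b1:ℤ) ∧ x.2.2.2 = (b2:ℤ) ∧ x.1 ∈ B1 ∧ x.2.1 ∈ B1 ∧
        (q:ℤ) ∣ (x.1 * x.2.2.1 - x.2.1 * x.2.2.2) := by
      intro x hx
      simp only [hF, Finset.mem_filter, Finset.mem_product] at hx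
      obtain ⟨⟨⟨hx1, hx2, hx3, hx4⟩, hdvd⟩, heq⟩ := hx
      rw [hBU, Finset.mem_Icc] at hx3 hx4
      have e1 : x.2.2.1.toNat = b1 := congrArg Prod.fst heq
      have e2 : x.2.2.2.toNat = b2 := congrArg Prod.snd heq
      refine ⟨by omega, by omega, hx1, hx2, hdvd⟩
    refine le_trans (Finset.card_le_card_of_injOn (fun x => (x.1, x.2.1)) ?_ ?_)
      (inner_count hq hNU hU1 hUN hb11 hb1U hb21 hb2U M)
    · intro x hx
      obtain ⟨e1, e2, h1, h2, hdvd⟩ := hval x hx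
      rw [Finset.mem_coe, Finset.mem_filter, Finset.mem_product]
      rw [e1, e2] at hdvd
      exact ⟨⟨h1, h2⟩, hdvd⟩
    · intro x hx y hy hxy
      obtain ⟨ex1, ex2, _, _, _⟩ := hval x (by exact hx)
      obtain ⟨ey1, ey2, _, _, _⟩ := hval y (by exact hy)
      have hxy' : (x.1, x.2.1) = (y.1, y.2.1) := hxy
      have h1 : x.1 = y.1 := (Prod.ext_iff.mp hxy').1
      have h2 : x.2.1 = y.2.1 := (Prod.ext_iff.mp hxy').2
      have h3 : x.2.2.1 = y.2.2.1 := by rw [ex1, ey1]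
      have h4 : x.2.2.2 = y.2.2.2 := by rw [ex2, ey2]
      exact Prod.ext h1 (Prod.ext h2 (Prod.ext h3 h4))
  have hnat : F.card ≤ ∑ b ∈ t,
      2 * (N / (max (b.1 / Nat.gcd b.1 b.2) (b.2 / Nat.gcd b.1 b.2)) + 1) := by
    rw [hdecomp]
    exact Finset.sum_le_sum hfib
  -- Step 4 : pass to real numbers
  have hreal1 : (F.card : ℝ) ≤ ∑ b ∈ t,
      (2 * ((N / (max (b.1 / Nat.gcd b.1 b.2) (b.2 / Nat.gcd b.1 b.2)) : ℕ) : ℝ) + 2) := by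
    calc (F.card : ℝ) ≤ ((∑ b ∈ t,
        2 * (N / (max (b.1 / Nat.gcd b.1 b.2) (b.2 / Nat.gcd b.1 b.2)) + 1) : ℕ) : ℝ) := by
          exact_mod_cast hnat
      _ = _ := by push_cast; exact Finset.sum_congr rfl (fun x _ => by ring)
  set f : ℕ × ℕ → ℕ → ℝ := fun b d =>
    if d ∣ b.1 ∧ d ∣ b.2 then (1:ℝ)/(max (b.1/d) (b.2/d)) else 0 with hf
  have hkey : ∀ b ∈ t, ((N / (max (b.1 / Nat.gcd b.1 b.2) (b.2 / Nat.gcd b.1 b.2)) : ℕ) : ℝ)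
      ≤ (N:ℝ) * ∑ d ∈ Finset.Icc 1 U, f b d := by
    rintro ⟨b1, b2⟩ hb
    simp only [ht, Finset.mem_product, Finset.mem_Icc] at hb
    obtain ⟨⟨hb11, hb1U⟩, hb21, hb2U⟩ := hb
    dsimp only
    set g := Nat.gcd b1 b2 with hg
    have hgpos : 0 < g := Nat.gcd_pos_of_pos_left _ (by omega)
    have hgU : g ≤ U := le_trans (Nat.le_of_dvd (by omega) (Nat.gcd_dvd_left _ _)) hb1U
    have hmw : 0 < max (b1 / g) (b2 / g) := by
      have : 1 ≤ b1 / g := (Nat.one_le_div_iff hgpos).mpr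
        (Nat.le_of_dvd (by omega) (Nat.gcd_dvd_left _ _))
      omega
    have h1 : ((N / (max (b1 / g) (b2 / g)) : ℕ) : ℝ) ≤ (N:ℝ) / (max (b1 / g) (b2 / g)) :=
      Nat.cast_div_le
    have h2 : (1:ℝ)/(max (b1 / g) (b2 / g)) ≤ ∑ d ∈ Finset.Icc 1 U, f (b1, b2) d := by
      have hterm : f (b1, b2) g = (1:ℝ)/(max (b1 / g) (b2 / g)) := by
        simp only [hf]
        exact if_pos ⟨Nat.gcd_dvd_left b1 b2, Nat.gcd_dvd_right b1 b2⟩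
      rw [← hterm]
      apply Finset.single_le_sum
      · intro d _
        simp only [hf]
        split
        · positivity
        · exact le_refl 0
      · rw [Finset.mem_Icc]; omega
    calc ((N / (max (b1 / g) (b2 / g)) : ℕ) : ℝ) ≤ (N:ℝ) / (max (b1 / g) (b2 / g)) := h1
      _ = (N:ℝ) * ((1:ℝ)/(max (b1 / g) (b2 / g))) := by rw [mul_one_div]
      _ ≤ (N:ℝ) * ∑ d ∈ Finset.Icc 1 U, f (b1, b2) d := by
          apply mul_le_mul_of_nonneg_left h2 (by positivity)
  have hreal2 : (F.card : ℝ) ≤ 2 * (N:ℝ) * (∑ b ∈ t, ∑ d ∈ Finset.Icc 1 U, f b d)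
      + 2 * (U:ℝ) * U := by
    have htcard : (t.card : ℝ) = (U:ℝ) * U := by
      have e : U + 1 - 1 = U := by omega
      rw [ht, Finset.card_product, Nat.card_Icc, e]
      push_cast
      ring
    calc (F.card : ℝ) ≤ ∑ b ∈ t,
        (2 * ((N / (max (b.1 / Nat.gcd b.1 b.2) (b.2 / Nat.gcd b.1 b.2)) : ℕ) : ℝ) + 2) :=
          hreal1
      _ ≤ ∑ b ∈ t, (2 * ((N:ℝ) * ∑ d ∈ Finset.Icc 1 U, f b d) + 2) := by
          apply Finset.sum_le_sum
          intro b hb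
          have := hkey b hb
          linarith
      _ = (∑ b ∈ t, 2 * (N:ℝ) * ∑ d ∈ Finset.Icc 1 U, f b d) + 2 * t.card := by
          rw [Finset.sum_add_distrib, Finset.sum_const, nsmul_eq_mul]
          rw [Finset.sum_congr rfl (fun b _ => by ring :
            ∀ b ∈ t, 2 * ((N:ℝ) * ∑ d ∈ Finset.Icc 1 U, f b d)
              = 2 * (N:ℝ) * ∑ d ∈ Finset.Icc 1 U, f b d)]
          ring
      _ = 2 * (N:ℝ) * (∑ b ∈ t, ∑ d ∈ Finset.Icc 1 U, f b d) + 2 * t.card := by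
          rw [Finset.mul_sum]
      _ = _ := by rw [htcard]; ring
  -- Step 5 : bound the double sum
  have hdouble : ∑ b ∈ t, ∑ d ∈ Finset.Icc 1 U, f b d ≤ 2 * (U:ℝ) * (1 + Real.log U) := by
    rw [Finset.sum_comm]
    have hstep : ∀ d ∈ Finset.Icc 1 U, ∑ b ∈ t, f b d ≤ 2 * (U:ℝ) / d := by
      intro d hd
      rw [Finset.mem_Icc] at hd
      have h1 := sum_reindex U d hd.1
      have h2 : ((U / d : ℕ) : ℝ) ≤ (U:ℝ) / d := Nat.cast_div_le
      calc ∑ b ∈ t, f b d ≤ 2 * ((U / d : ℕ) : ℝ) := h1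
        _ ≤ 2 * ((U:ℝ) / d) := by linarith
        _ = 2 * (U:ℝ) / d := by ring
    calc ∑ d ∈ Finset.Icc 1 U, ∑ b ∈ t, f b d ≤ ∑ d ∈ Finset.Icc 1 U, 2 * (U:ℝ) / d :=
          Finset.sum_le_sum hstep
      _ = 2 * (U:ℝ) * ∑ d ∈ Finset.Icc 1 U, (1:ℝ)/d := by
          rw [Finset.mul_sum]
          apply Finset.sum_congr rfl
          intro d _
          ring
      _ ≤ 2 * (U:ℝ) * (1 + Real.log U) := by
          have := sum_one_div_le U
          have hU0 : (0:ℝ) ≤ 2 * (U:ℝ) := by positivity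
          nlinarith
  -- Step 6 : conclude
  have hlogU : Real.log U ≤ Real.log q := by
    apply Real.log_le_log (by exact_mod_cast hU1)
    exact_mod_cast le_trans (le_trans (Nat.le_mul_of_pos_left U (by omega)) hNU) (le_refl q)
  have hlogq : (0.6931471803 : ℝ) < Real.log q :=
    lt_of_lt_of_le Real.log_two_gt_d9 (Real.log_le_log (by norm_num) (by exact_mod_cast hq2))
  have hn1 : (1:ℝ) ≤ N := by exact_mod_cast hN1
  have hu1 : (1:ℝ) ≤ U := by exact_mod_cast hU1
  have hun : (U:ℝ) ≤ N := by exact_mod_cast hUN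
  have hlogU0 : 0 ≤ Real.log U := Real.log_nonneg hu1
  calc (F.card : ℝ) ≤ 2 * (N:ℝ) * (∑ b ∈ t, ∑ d ∈ Finset.Icc 1 U, f b d)
      + 2 * (U:ℝ) * U := hreal2
    _ ≤ 2 * (N:ℝ) * (2 * (U:ℝ) * (1 + Real.log U)) + 2 * (U:ℝ) * U := by
        have := mul_le_mul_of_nonneg_left hdouble (show (0:ℝ) ≤ 2 * (N:ℝ) by positivity)
        linarith
    _ ≤ 16 * (N:ℝ) * U * Real.log q := by
        have hNU0 : (0:ℝ) ≤ (N:ℝ) * U := by positivity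
        have e1 : 2*(N:ℝ)*(2*(U:ℝ)*(1+Real.log U))
            = 4*((N:ℝ)*U) + 4*((N:ℝ)*U)*Real.log U := by ring
        have e2 : 4*((N:ℝ)*U)*Real.log U ≤ 4*((N:ℝ)*U)*Real.log q :=
          mul_le_mul_of_nonneg_left hlogU (by positivity)
        have e3 : 2*(U:ℝ)*U ≤ 2*((N:ℝ)*U) := by nlinarith
        have e4 := mul_le_mul_of_nonneg_left (le_of_lt hlogq)
          (show (0:ℝ) ≤ 12*((N:ℝ)*U) by positivity)
        have e5 : 16 * (N:ℝ) * U * Real.log q = 16*((N:ℝ)*U)*Real.log q := by ring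
        rw [e5]
        nlinarith [e1, e2, e3, e4]
end

section
/- Let q be prime and let k ≥ 2 be an integer. Let M, N, U be integers with NU ≤ q and 1 ≤ U ≤ N. Then the number of quadruples (n_1, n_2, u_1, u_2) with M ≤ n_1, n_2 ≤ M+N, 1 ≤ u_1, u_2 ≤ U satisfying u_1^k ≡ u_2^k (mod q) and u_1^{k-1} n_1 ≡ u_2^{k-1} n_2 (mod q) is at most k·N·U (up to an absolute constant), i.e. I_{k,1}(N,U) ≪ NU. -/
theorem stmt_5 : ∃ C : ℝ, 0 < C ∧ ∀ (q k N U : ℕ) (M : ℤ), q.Prime → 2 ≤ k →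
    N * U ≤ q → 1 ≤ U → U ≤ N →
    (Nat.card {x : ℤ × ℤ × ℤ × ℤ //
        (M ≤ x.1 ∧ x.1 ≤ M + N) ∧ (M ≤ x.2.1 ∧ x.2.1 ≤ M + N) ∧
        (1 ≤ x.2.2.1 ∧ x.2.2.1 ≤ (U : ℤ)) ∧ (1 ≤ x.2.2.2 ∧ x.2.2.2 ≤ (U : ℤ)) ∧
        (q : ℤ) ∣ (x.2.2.1 ^ k - x.2.2.2 ^ k) ∧
        (q : ℤ) ∣ (x.2.2.1 ^ (k - 1) * x.1 - x.2.2.2 ^ (k - 1) * x.2.1)} : ℝ) ≤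
      C * k * N * U := by
  refine ⟨4, by norm_num, ?_⟩
  intro q k N U M hq hk hNU hU hUN
  haveI : Fact q.Prime := ⟨hq⟩
  have hq2 : 2 ≤ q := hq.two_le
  have hNq : N ≤ q := le_trans (Nat.le_mul_of_pos_right N (by omega)) hNU
  have hUq : U < q := by nlinarith [Nat.mul_le_mul_right U hUN]
  have hN1 : 1 ≤ N := le_trans hU hUN
  -- the target finset
  set R : ℤ → Finset (ZMod q) := fun u => (Polynomial.nthRoots k ((u : ZMod q) ^ k)).toFinset
    with hRdef
  set T : Finset (ℤ × Σ _ : ℤ, ZMod q × Bool) :=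
    (Finset.Icc M (M + N)) ×ˢ (Finset.Icc (1:ℤ) (U:ℤ)).sigma
      (fun u => R u ×ˢ (Finset.univ : Finset Bool)) with hTdef
  have key : Nat.card {x : ℤ × ℤ × ℤ × ℤ //
        (M ≤ x.1 ∧ x.1 ≤ M + N) ∧ (M ≤ x.2.1 ∧ x.2.1 ≤ M + N) ∧
        (1 ≤ x.2.2.1 ∧ x.2.2.1 ≤ (U : ℤ)) ∧ (1 ≤ x.2.2.2 ∧ x.2.2.2 ≤ (U : ℤ)) ∧
        (q : ℤ) ∣ (x.2.2.1 ^ k - x.2.2.2 ^ k) ∧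
        (q : ℤ) ∣ (x.2.2.1 ^ (k - 1) * x.1 - x.2.2.2 ^ (k - 1) * x.2.1)} ≤ T.card := by
    rw [← Nat.card_eq_finsetCard]
    apply Nat.card_le_card_of_injective
      (f := fun x => (⟨(x.1.1, ⟨x.1.2.2.1, ((x.1.2.2.2 : ZMod q), decide (M + q ≤ x.1.2.1))⟩),
        by
          obtain ⟨⟨n1, n2, u1, u2⟩, h1, h2, h3, h4, h5, h6⟩ := x
          simp only [hTdef, Finset.mem_product, Finset.mem_sigma, Finset.mem_Icc,
            Finset.mem_univ, and_true]
          refine ⟨h1, h3, ?_⟩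
          simp only [hRdef, Multiset.mem_toFinset]
          rw [Polynomial.mem_nthRoots (by omega : 0 < k)]
          have : ((u1 ^ k - u2 ^ k : ℤ) : ZMod q) = 0 :=
            (ZMod.intCast_zmod_eq_zero_iff_dvd _ q).mpr h5
          push_cast at this
          linear_combination -this⟩ : {y // y ∈ T}))
    intro x y hxy
    obtain ⟨⟨n1, n2, u1, u2⟩, h1, h2, h3, h4, h5, h6⟩ := x
    obtain ⟨⟨m1, m2, v1, v2⟩, g1, g2, g3, g4, g5, g6⟩ := y
    dsimp only at h1 h2 h3 h4 h5 h6 g1 g2 g3 g4 g5 g6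
    simp only [Subtype.mk.injEq, Prod.mk.injEq, Sigma.mk.inj_iff] at hxy ⊢
    obtain ⟨hn1, hu1, hrest⟩ := hxy
    subst hn1; subst hu1
    rw [heq_eq_eq, Prod.mk.injEq] at hrest
    obtain ⟨hu2, hbit⟩ := hrest
    -- u2 = v2
    have hu2' : u2 = v2 := by
      rw [ZMod.intCast_eq_intCast_iff] at hu2
      have hd : (q : ℤ) ∣ u2 - v2 := (Int.ModEq.dvd hu2.symm)
      have := Int.eq_zero_of_abs_lt_dvd hd (by
        rw [abs_lt]
        constructor <;> [nlinarith [h4.1, g4.2, hUq]; nlinarith [h4.2, g4.1, hUq]])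
      linarith
    subst hu2'
    refine ⟨rfl, ?_, rfl, rfl⟩
    -- n2 = m2
    have hqZ : Prime (q : ℤ) := Nat.prime_iff_prime_int.mp hq
    have hnd : ¬ (q : ℤ) ∣ u2 := by
      intro hdvd
      have := Int.le_of_dvd (by linarith [h4.1]) hdvd
      have : (U : ℤ) < q := by exact_mod_cast hUq
      linarith [h4.2]
    have hd : (q : ℤ) ∣ u2 ^ (k - 1) * (m2 - n2) := by
      have : u2 ^ (k - 1) * (m2 - n2) =
          (u1 ^ (k - 1) * n1 - u2 ^ (k - 1) * n2) -
          (u1 ^ (k - 1) * n1 - u2 ^ (k - 1) * m2) := by ring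
      rw [this]
      exact dvd_sub h6 g6
    have hd2 : (q : ℤ) ∣ m2 - n2 := by
      rcases hqZ.dvd_mul.mp hd with h | h
      · exact absurd (hqZ.dvd_of_dvd_pow h) hnd
      · exact h
    have hiff : (M + q ≤ n2) ↔ (M + q ≤ m2) := decide_eq_decide.mp hbit
    have hNqZ : (N : ℤ) ≤ q := by exact_mod_cast hNq
    have hlt : |m2 - n2| < q := by
      rw [abs_lt]
      by_cases hb : M + q ≤ n2
      · have := hiff.mp hb
        constructor <;> omega
      · have := hiff.not.mp hb
        constructor <;> omega
    have := Int.eq_zero_of_abs_lt_dvd hd2 hlt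
    omega
  -- bound T.card
  have hTcard : T.card ≤ (N + 1) * (U * (2 * k)) := by
    rw [hTdef, Finset.card_product, Finset.card_sigma]
    have h1 : (Finset.Icc M (M + N)).card = N + 1 := by
      rw [Int.card_Icc]; omega
    have h2 : ∑ u ∈ Finset.Icc (1:ℤ) (U:ℤ), (R u ×ˢ (Finset.univ : Finset Bool)).card
        ≤ U * (2 * k) := by
      calc ∑ u ∈ Finset.Icc (1:ℤ) (U:ℤ), (R u ×ˢ (Finset.univ : Finset Bool)).card
          ≤ ∑ _u ∈ Finset.Icc (1:ℤ) (U:ℤ), (2 * k) := by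
            apply Finset.sum_le_sum
            intro u _
            simp only [Finset.card_product, Finset.card_univ, Fintype.card_bool]
            have : (R u).card ≤ k :=
              le_trans (Multiset.toFinset_card_le _) (Polynomial.card_nthRoots k _)
            omega
        _ = U * (2 * k) := by
            rw [Finset.sum_const, smul_eq_mul, Int.card_Icc]
            congr 1
            omega
    rw [h1]
    exact Nat.mul_le_mul_left _ h2
  have hfin : (N + 1) * (U * (2 * k)) ≤ 4 * k * N * U := by
    have h2N : (N + 1) * (U * (2 * k)) ≤ (2 * N) * (U * (2 * k)) :=
      Nat.mul_le_mul_right _ (by omega)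
    have e : (2 * N) * (U * (2 * k)) = 4 * k * N * U := by ring
    omega
  refine le_trans (Nat.cast_le.mpr (le_trans key (le_trans hTcard hfin))) ?_
  push_cast
  ring_nf
  exact le_refl _
end

section
/- Let q be a prime, ℓ ≥ 1 an integer, and k an integer with 2ℓ ≤ k. Suppose (n_1,...,n_{2ℓ}, u_1,...,u_{2ℓ}) is a solution to the congruence system n_1^j u_1^{k−j} + ⋯ + n_ℓ^j u_ℓ^{k−j} ≡ n_{ℓ+1}^j u_{ℓ+1}^{k−j} + ⋯ + n_{2ℓ}^j u_{2ℓ}^{k−j} (mod q) for all j = 0, 1, ..., 2ℓ−1, with all u_i not divisible by q. Then there exist indices r ≠ s in {1,...,2ℓ} with n_r u_s ≡ n_s u_r (mod q). -/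
theorem stmt_7 (q ℓ k : ℕ) (hq : q.Prime) (hℓ : 1 ≤ ℓ) (hk : 2 * ℓ ≤ k)
    (n u : Fin (2 * ℓ) → ℤ) (hu : ∀ i, ¬ (q : ℤ) ∣ u i)
    (hsys : ∀ j : ℕ, j < 2 * ℓ →
      (q : ℤ) ∣ ∑ i : Fin (2 * ℓ),
        (if (i : ℕ) < ℓ then (1 : ℤ) else -1) * (n i) ^ j * (u i) ^ (k - j)) :
    ∃ r s : Fin (2 * ℓ), r ≠ s ∧ (q : ℤ) ∣ (n r * u s - n s * u r) := by
  by_contra hcon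
  push_neg at hcon
  haveI : Fact q.Prime := ⟨hq⟩
  have hu0 : ∀ i, ((u i : ZMod q)) ≠ 0 := fun i h =>
    hu i ((ZMod.intCast_zmod_eq_zero_iff_dvd _ _).mp h)
  set x : Fin (2 * ℓ) → ZMod q := fun i => (n i : ZMod q) * (u i : ZMod q)⁻¹ with hx
  have hxinj : Function.Injective x := by
    intro r s hrs
    by_contra hne
    apply hcon r s hne
    rw [← ZMod.intCast_zmod_eq_zero_iff_dvd]
    push_cast
    have h2 : (n r : ZMod q) * (u s) = (n s : ZMod q) * (u r) := by
      have := hrs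
      simp only [hx] at this
      field_simp [hu0 r, hu0 s] at this
      linear_combination this
    rw [sub_eq_zero, h2]
  set c : Fin (2 * ℓ) → ZMod q :=
    fun i => (if (i : ℕ) < ℓ then (1 : ZMod q) else -1) * (u i : ZMod q) ^ k with hcdef
  have hc0 : ∀ i, c i ≠ 0 := by
    intro i
    simp only [hcdef]
    intro h
    rcases mul_eq_zero.mp h with h | h
    · split_ifs at h <;> simp_all
    · exact hu0 i (pow_eq_zero_iff (by omega) |>.mp h)
  have hmul : ∀ j : Fin (2 * ℓ), ∑ i, x i ^ (j : ℕ) * c i = 0 := by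
    intro j
    have h := (ZMod.intCast_zmod_eq_zero_iff_dvd _ _).mpr (hsys j j.isLt)
    push_cast at h
    rw [← h]
    apply Finset.sum_congr rfl
    intro i _
    have hj : (j : ℕ) ≤ k := le_trans j.isLt.le hk
    have hpow : (u i : ZMod q) ^ (k - (j : ℕ)) =
        (u i : ZMod q) ^ k * ((u i : ZMod q)⁻¹) ^ (j : ℕ) := by
      rw [pow_sub₀ _ (hu0 i) hj, inv_pow]
    rw [hpow, hx]
    ring
  set M : Matrix (Fin (2 * ℓ)) (Fin (2 * ℓ)) (ZMod q) := (Matrix.vandermonde x).transpose with hM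
  have hdet : M.det ≠ 0 := by
    rw [hM, Matrix.det_transpose, Matrix.det_vandermonde]
    apply Finset.prod_ne_zero_iff.mpr
    intro i _
    apply Finset.prod_ne_zero_iff.mpr
    intro j hj
    have : i ≠ j := (Finset.mem_Ioi.mp hj).ne
    exact sub_ne_zero_of_ne fun hh => this (hxinj hh.symm)
  have hmv : M.mulVec c = 0 := by
    funext j
    simpa [hM, Matrix.mulVec, dotProduct, Matrix.vandermonde] using hmul j
  have hinj : Function.Injective M.mulVec :=
    Matrix.mulVec_injective_iff_isUnit.mpr ((Matrix.isUnit_iff_isUnit_det M).mpr hdet.isUnit)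
  have : c = 0 := hinj (by simp [hmv])
  exact hc0 ⟨0, by omega⟩ (by rw [this]; rfl)
end

section
/- Let q be prime, M, N, U integers with NU ≤ q and 1 ≤ U ≤ N, and let ℓ ≥ 1, k be integers with 2ℓ ≤ k. Let I_{k,ℓ}(N,U) denote the number of tuples (n_1,...,n_{2ℓ}, u_1,...,u_{2ℓ}) with M < n_i ≤ M+N and 1 ≤ u_i ≤ U satisfying n_1^j u_1^{k−j} + ⋯ + n_ℓ^j u_ℓ^{k−j} ≡ n_{ℓ+1}^j u_{ℓ+1}^{k−j} + ⋯ + n_{2ℓ}^j u_{2ℓ}^{k−j} (mod q) for all j = 0,...,2ℓ−1. Then I_{k,ℓ}(N,U) ≪ (NU)^ℓ (log q)^{ℓ−1}, with an implied constant depending only on k and ℓ. -/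
open Finset Polynomial

namespace Stmt8

abbrev Idx (ℓ : ℕ) := Fin (2 * ℓ)

def Sol (k ℓ q N U : ℕ) (M : ℤ) (nu : (Idx ℓ → ℤ) × (Idx ℓ → ℤ)) : Prop :=
  (∀ i, M < nu.1 i ∧ nu.1 i ≤ M + N) ∧ (∀ i, 1 ≤ nu.2 i ∧ nu.2 i ≤ (U : ℤ)) ∧
  (∀ j : ℕ, j < 2 * ℓ →
    (q : ℤ) ∣ ∑ i : Idx ℓ,
      (if (i : ℕ) < ℓ then (1 : ℤ) else -1) * (nu.1 i) ^ j * (nu.2 i) ^ (k - j))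

def eps (ℓ : ℕ) (i : Idx ℓ) : ℤ := if (i : ℕ) < ℓ then 1 else -1

def tm (q ℓ : ℕ) (nu : (Idx ℓ → ℤ) × (Idx ℓ → ℤ)) (i : Idx ℓ) : ZMod q :=
  ((nu.1 i : ℤ) : ZMod q) * ((nu.2 i : ℤ) : ZMod q)⁻¹

def cls (q ℓ : ℕ) (nu : (Idx ℓ → ℤ) × (Idx ℓ → ℤ)) (i : Idx ℓ) : Finset (Idx ℓ) :=
  univ.filter fun j => tm q ℓ nu j = tm q ℓ nu i

lemma mem_cls_self (q ℓ : ℕ) (nu : (Idx ℓ → ℤ) × (Idx ℓ → ℤ)) (i : Idx ℓ) :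
    i ∈ cls q ℓ nu i := by simp [cls]

def pm (q ℓ : ℕ) (nu : (Idx ℓ → ℤ) × (Idx ℓ → ℤ)) (i : Idx ℓ) : Idx ℓ :=
  (cls q ℓ nu i).min' ⟨i, mem_cls_self q ℓ nu i⟩

lemma min'_eq_of_eq {α : Type*} [LinearOrder α] {s t : Finset α} (h : s = t)
    (hs : s.Nonempty) (ht : t.Nonempty) : s.min' hs = t.min' ht := by subst h; rfl

lemma tm_pm (q ℓ : ℕ) (nu : (Idx ℓ → ℤ) × (Idx ℓ → ℤ)) (i : Idx ℓ) :
    tm q ℓ nu (pm q ℓ nu i) = tm q ℓ nu i := by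
  have h := Finset.min'_mem (cls q ℓ nu i) ⟨i, mem_cls_self q ℓ nu i⟩
  simpa [cls, pm] using h

lemma pm_le (q ℓ : ℕ) (nu : (Idx ℓ → ℤ) × (Idx ℓ → ℤ)) (i : Idx ℓ) :
    pm q ℓ nu i ≤ i := Finset.min'_le _ _ (mem_cls_self q ℓ nu i)

lemma cls_eq_of_tm_eq {q ℓ : ℕ} {nu : (Idx ℓ → ℤ) × (Idx ℓ → ℤ)} {i j : Idx ℓ}
    (h : tm q ℓ nu j = tm q ℓ nu i) : cls q ℓ nu j = cls q ℓ nu i := by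
  unfold cls; simp only [h]

lemma pm_eq_of_tm_eq {q ℓ : ℕ} {nu : (Idx ℓ → ℤ) × (Idx ℓ → ℤ)} {i j : Idx ℓ}
    (h : tm q ℓ nu j = tm q ℓ nu i) : pm q ℓ nu j = pm q ℓ nu i :=
  min'_eq_of_eq (cls_eq_of_tm_eq h) _ _

lemma pm_pm (q ℓ : ℕ) (nu : (Idx ℓ → ℤ) × (Idx ℓ → ℤ)) (i : Idx ℓ) :
    pm q ℓ nu (pm q ℓ nu i) = pm q ℓ nu i :=
  pm_eq_of_tm_eq (tm_pm q ℓ nu i)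

lemma pm_fiber (q ℓ : ℕ) (nu : (Idx ℓ → ℤ) × (Idx ℓ → ℤ)) (i : Idx ℓ) :
    (univ.filter fun j => pm q ℓ nu j = pm q ℓ nu i) = cls q ℓ nu i := by
  ext j
  simp only [mem_filter, mem_univ, true_and, cls]
  constructor
  · intro h
    have h1 : tm q ℓ nu j = tm q ℓ nu (pm q ℓ nu j) := (tm_pm q ℓ nu j).symm
    rw [h1, h, tm_pm]
  · exact fun h => pm_eq_of_tm_eq h


section
variable {k ℓ q N U : ℕ} {M : ℤ}

lemma hUlt_of (hq : q.Prime) (hNU : N * U ≤ q) (hU1 : 1 ≤ U) (hUN : U ≤ N) : U < q := by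
  by_contra h
  push_neg at h
  have h1 : U * U ≤ q := le_trans (Nat.mul_le_mul_right U hUN) hNU
  have h3 : U * U ≤ U := le_trans h1 h
  have h4 : U ≤ 1 := Nat.le_of_mul_le_mul_left (by simpa using h3) (by omega)
  have := hq.two_le
  omega

lemma u_ne_zero (hq : q.Prime) (hUlt : U < q) {nu : (Idx ℓ → ℤ) × (Idx ℓ → ℤ)}
    (hs : Sol k ℓ q N U M nu) (i : Idx ℓ) : ((nu.2 i : ℤ) : ZMod q) ≠ 0 := by
  rw [Ne, ZMod.intCast_zmod_eq_zero_iff_dvd]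
  intro hdvd
  have h1 := (hs.2.1 i).1
  have h2 := (hs.2.1 i).2
  have h3 := Int.le_of_dvd (by omega) hdvd
  omega

lemma key_alg {F : Type*} [Field F] {u : F} (hu : u ≠ 0) (n : F) {j k : ℕ} (hjk : j ≤ k) :
    n ^ j * u ^ (k - j) = u ^ k * (n * u⁻¹) ^ j := by
  have h2 : u ^ (k - j) * u ^ j = u ^ k := pow_sub_mul_pow u hjk
  have h3 : u ^ j * (u⁻¹) ^ j = 1 := by rw [← mul_pow, mul_inv_cancel₀ hu, one_pow]
  rw [mul_pow, ← h2,
    show u ^ (k - j) * u ^ j * (n ^ j * (u⁻¹) ^ j) = (n ^ j * u ^ (k - j)) * (u ^ j * (u⁻¹) ^ j)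
      from by ring, h3, mul_one]

lemma powsum (hq : q.Prime) (hUlt : U < q) (hk : 2 * ℓ ≤ k)
    {nu : (Idx ℓ → ℤ) × (Idx ℓ → ℤ)} (hs : Sol k ℓ q N U M nu) {j : ℕ} (hj : j < 2 * ℓ) :
    ∑ i : Idx ℓ, ((eps ℓ i : ℤ) : ZMod q) * ((nu.2 i : ℤ) : ZMod q) ^ k * (tm q ℓ nu i) ^ j
      = 0 := by
  haveI : Fact q.Prime := ⟨hq⟩
  have hdvd := hs.2.2 j hj
  have h0 : ((∑ i : Idx ℓ,
      (if (i : ℕ) < ℓ then (1 : ℤ) else -1) * (nu.1 i) ^ j * (nu.2 i) ^ (k - j) : ℤ) : ZMod q)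
      = 0 := by
    rw [ZMod.intCast_zmod_eq_zero_iff_dvd]; exact hdvd
  rw [← h0, Int.cast_sum]
  apply sum_congr rfl
  intro i _
  have hu := u_ne_zero hq hUlt hs i
  have halg := key_alg hu ((nu.1 i : ℤ) : ZMod q) (le_trans (le_of_lt hj) hk)
  unfold eps tm
  push_cast
  split_ifs with hcond
  · rw [one_mul, one_mul, halg]
  · linear_combination halg

lemma classsum (hq : q.Prime) (hUlt : U < q) (hk : 2 * ℓ ≤ k) (hl : 1 ≤ ℓ)
    {nu : (Idx ℓ → ℤ) × (Idx ℓ → ℤ)} (hs : Sol k ℓ q N U M nu) (τ : ZMod q) :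
    ∑ i ∈ univ.filter (fun i => tm q ℓ nu i = τ),
      ((eps ℓ i : ℤ) : ZMod q) * ((nu.2 i : ℤ) : ZMod q) ^ k = 0 := by
  haveI : Fact q.Prime := ⟨hq⟩
  by_cases hτ : ∃ i, tm q ℓ nu i = τ
  · obtain ⟨i₀, hi₀⟩ := hτ
    set T : Finset (ZMod q) := univ.image (tm q ℓ nu) with hT
    have hτT : τ ∈ T := by rw [hT, mem_image]; exact ⟨i₀, mem_univ _, hi₀⟩
    set g : Polynomial (ZMod q) := ∏ τ' ∈ T.erase τ, (X - C τ') with hg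
    have hdegeq : g.natDegree = (T.erase τ).card := by
      rw [hg, natDegree_prod _ _ (fun τ' _ => X_sub_C_ne_zero τ')]
      simp [natDegree_X_sub_C]
    have hdeg : g.natDegree ≤ 2 * ℓ - 1 := by
      have h1 : T.card ≤ 2 * ℓ := le_trans (card_image_le) (by simp)
      have h2 := Finset.card_erase_of_mem hτT
      omega
    have hzero : ∀ j' ∈ range (g.natDegree + 1),
        ∑ i : Idx ℓ, ((eps ℓ i : ℤ) : ZMod q) * ((nu.2 i : ℤ) : ZMod q) ^ k
          * (tm q ℓ nu i) ^ j' = 0 := by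
      intro j' hj'
      rw [mem_range] at hj'
      exact powsum hq hUlt hk hs (by omega)
    have hsum : ∑ i : Idx ℓ, ((eps ℓ i : ℤ) : ZMod q) * ((nu.2 i : ℤ) : ZMod q) ^ k
        * eval (tm q ℓ nu i) g = 0 := by
      calc ∑ i : Idx ℓ, ((eps ℓ i : ℤ) : ZMod q) * ((nu.2 i : ℤ) : ZMod q) ^ k
            * eval (tm q ℓ nu i) g
          = ∑ i : Idx ℓ, ∑ j' ∈ range (g.natDegree + 1),
              g.coeff j' * (((eps ℓ i : ℤ) : ZMod q) * ((nu.2 i : ℤ) : ZMod q) ^ k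
                * (tm q ℓ nu i) ^ j') := by
            apply sum_congr rfl; intro i _
            rw [eval_eq_sum_range, mul_sum]
            apply sum_congr rfl; intro j' _; ring
        _ = ∑ j' ∈ range (g.natDegree + 1), g.coeff j'
              * ∑ i : Idx ℓ, ((eps ℓ i : ℤ) : ZMod q) * ((nu.2 i : ℤ) : ZMod q) ^ k
                * (tm q ℓ nu i) ^ j' := by
            rw [sum_comm]
            apply sum_congr rfl; intro j' _
            rw [mul_sum]
        _ = 0 := by
            apply sum_eq_zero; intro j' hj'
            rw [hzero j' hj', mul_zero]
    rw [← sum_filter_add_sum_filter_not univ (fun i => tm q ℓ nu i = τ)] at hsum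
    have h2 : ∑ i ∈ univ.filter (fun i => ¬ tm q ℓ nu i = τ),
        ((eps ℓ i : ℤ) : ZMod q) * ((nu.2 i : ℤ) : ZMod q) ^ k * eval (tm q ℓ nu i) g = 0 := by
      apply sum_eq_zero; intro i hi
      rw [mem_filter] at hi
      have hmem : tm q ℓ nu i ∈ T.erase τ :=
        mem_erase.mpr ⟨hi.2, by rw [hT, mem_image]; exact ⟨i, mem_univ _, rfl⟩⟩
      have heval0 : eval (tm q ℓ nu i) g = 0 := by
        rw [hg, eval_prod]
        exact prod_eq_zero hmem (by simp)
      rw [heval0, mul_zero]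
    rw [h2, add_zero] at hsum
    have h3 : ∑ i ∈ univ.filter (fun i => tm q ℓ nu i = τ),
        ((eps ℓ i : ℤ) : ZMod q) * ((nu.2 i : ℤ) : ZMod q) ^ k * eval (tm q ℓ nu i) g
        = (∑ i ∈ univ.filter (fun i => tm q ℓ nu i = τ),
            ((eps ℓ i : ℤ) : ZMod q) * ((nu.2 i : ℤ) : ZMod q) ^ k) * eval τ g := by
      rw [sum_mul]
      apply sum_congr rfl; intro i hi
      rw [mem_filter] at hi
      rw [hi.2]
    rw [h3] at hsum
    have heval : eval τ g ≠ 0 := by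
      rw [hg, eval_prod, prod_ne_zero_iff]
      intro τ' hτ'
      have := (mem_erase.mp hτ').1
      simp only [eval_sub, eval_X, eval_C]
      exact sub_ne_zero.mpr (Ne.symm this)
    rcases mul_eq_zero.mp hsum with h | h
    · exact h
    · exact absurd h heval
  · push_neg at hτ
    rw [Finset.filter_false_of_mem (fun i _ => hτ i), Finset.sum_empty]


lemma eps_ne_zero (hq : q.Prime) (i : Idx ℓ) : ((eps ℓ i : ℤ) : ZMod q) ≠ 0 := by
  haveI : Fact q.Prime := ⟨hq⟩
  unfold eps
  split_ifs <;> simp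

lemma cls_two (hq : q.Prime) (hUlt : U < q) (hk : 2 * ℓ ≤ k) (hl : 1 ≤ ℓ)
    {nu : (Idx ℓ → ℤ) × (Idx ℓ → ℤ)} (hs : Sol k ℓ q N U M nu) (i : Idx ℓ) :
    ∃ j, j ≠ i ∧ tm q ℓ nu j = tm q ℓ nu i := by
  haveI : Fact q.Prime := ⟨hq⟩
  by_contra hcon
  push_neg at hcon
  have hcl : (univ.filter fun j => tm q ℓ nu j = tm q ℓ nu i) = {i} := by
    apply Finset.eq_singleton_iff_unique_mem.mpr
    refine ⟨mem_cls_self q ℓ nu i, fun j hj => ?_⟩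
    by_contra hne
    exact hcon j hne (by simpa using (mem_filter.mp hj).2)
  have hz := classsum hq hUlt hk hl hs (tm q ℓ nu i)
  rw [hcl, sum_singleton] at hz
  exact (mul_ne_zero (eps_ne_zero hq i)
    (pow_ne_zero _ (u_ne_zero hq hUlt hs i))) hz

def Good (ℓ : ℕ) (p : Idx ℓ → Idx ℓ) : Prop :=
  (∀ i, p i ≤ i) ∧ (∀ i, p (p i) = p i) ∧ (∀ i, p i = i → ∃ j, j ≠ i ∧ p j = i)

instance (ℓ : ℕ) : DecidablePred (Good ℓ) := fun p => by unfold Good; infer_instance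

lemma good_pm (hq : q.Prime) (hUlt : U < q) (hk : 2 * ℓ ≤ k) (hl : 1 ≤ ℓ)
    {nu : (Idx ℓ → ℤ) × (Idx ℓ → ℤ)} (hs : Sol k ℓ q N U M nu) :
    Good ℓ (pm q ℓ nu) := by
  refine ⟨pm_le q ℓ nu, pm_pm q ℓ nu, fun i hfix => ?_⟩
  obtain ⟨j, hne, htm⟩ := cls_two hq hUlt hk hl hs i
  exact ⟨j, hne, by rw [pm_eq_of_tm_eq htm, hfix]⟩

noncomputable def rk (k q U : ℕ) (x : ℤ) : ℕ :=
  (((Finset.Icc (1 : ℤ) (U : ℤ)).filter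
      (fun v : ℤ => ((v : ZMod q)) ^ k = ((x : ZMod q)) ^ k)).filter (fun v => v < x)).card

noncomputable def Dbox (k N U : ℕ) (M : ℤ) (ℓ : ℕ) (p : Idx ℓ → Idx ℓ) (i : Idx ℓ) : Finset (ℤ × ℤ) :=
  if p i = i then (Finset.Ioc M (M + (N : ℤ))) ×ˢ (Finset.Icc (1 : ℤ) (U : ℤ))
  else if ∀ j, p j = p i → j ≤ i then (Finset.Icc (0 : ℤ) ((k : ℤ) - 1)) ×ˢ {(0 : ℤ)}
  else (Finset.Icc (1 : ℤ) (U : ℤ)) ×ˢ {(0 : ℤ)}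

def PF (ℓ : ℕ) : Finset (Idx ℓ → Idx ℓ) := univ.filter (Good ℓ)

noncomputable def Tgt (k ℓ N U : ℕ) (M : ℤ) : Finset ((_ : Idx ℓ → Idx ℓ) × (Idx ℓ → ℤ × ℤ)) :=
  (PF ℓ).sigma (fun p => Fintype.piFinset (Dbox k N U M ℓ p))

noncomputable def Phi (k ℓ q U : ℕ) (nu : (Idx ℓ → ℤ) × (Idx ℓ → ℤ)) :
    (_ : Idx ℓ → Idx ℓ) × (Idx ℓ → ℤ × ℤ) :=
  ⟨pm q ℓ nu, fun i =>
    if pm q ℓ nu i = i then (nu.1 i, nu.2 i)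
    else if ∀ j, pm q ℓ nu j = pm q ℓ nu i → j ≤ i then ((rk k q U (nu.2 i) : ℤ), 0)
    else (nu.2 i, 0)⟩

lemma roots_card (hq : q.Prime) (hUlt : U < q) (hk1 : 1 ≤ k) (a : ZMod q) :
    ((Finset.Icc (1 : ℤ) (U : ℤ)).filter (fun v : ℤ => ((v : ZMod q)) ^ k = a)).card ≤ k := by
  haveI : Fact q.Prime := ⟨hq⟩
  set A := (Finset.Icc (1 : ℤ) (U : ℤ)).filter (fun v : ℤ => ((v : ZMod q)) ^ k = a) with hA
  have hinj : Set.InjOn (fun v : ℤ => (v : ZMod q)) A := by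
    intro v hv w hw h
    rw [Finset.mem_coe, hA, mem_filter, mem_Icc] at hv hw
    have hz : ((v - w : ℤ) : ZMod q) = 0 := by push_cast; rw [sub_eq_zero]; exact_mod_cast h
    rw [ZMod.intCast_zmod_eq_zero_iff_dvd] at hz
    have := Int.eq_zero_of_abs_lt_dvd hz (by
      have := hv.1.1; have := hv.1.2; have := hw.1.1; have := hw.1.2
      rw [abs_lt]; omega)
    omega
  have hne : (X ^ k - C a : Polynomial (ZMod q)) ≠ 0 := X_pow_sub_C_ne_zero (by omega) a
  calc A.card = (A.image (fun v : ℤ => (v : ZMod q))).card := (card_image_of_injOn hinj).symm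
    _ ≤ ((X ^ k - C a : Polynomial (ZMod q)).roots.toFinset).card := by
        apply card_le_card
        intro x hx
        rw [mem_image] at hx
        obtain ⟨v, hv, rfl⟩ := hx
        rw [hA, mem_filter] at hv
        rw [Multiset.mem_toFinset, mem_roots hne]
        simp only [IsRoot, eval_sub, eval_pow, eval_X, eval_C]
        rw [hv.2, sub_self]
    _ ≤ Multiset.card (X ^ k - C a : Polynomial (ZMod q)).roots := Multiset.toFinset_card_le _
    _ ≤ (X ^ k - C a : Polynomial (ZMod q)).natDegree := card_roots' _
    _ = k := natDegree_X_pow_sub_C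

lemma rank_lt {R : Finset ℤ} {x : ℤ} (hx : x ∈ R) :
    (R.filter (fun v => v < x)).card < R.card := by
  apply card_lt_card
  constructor
  · exact filter_subset _ _
  · intro hsub
    have := hsub hx
    rw [mem_filter] at this
    exact absurd this.2 (lt_irrefl x)

lemma rank_inj {R : Finset ℤ} {x y : ℤ} (hx : x ∈ R) (hy : y ∈ R)
    (h : (R.filter (fun v => v < x)).card = (R.filter (fun v => v < y)).card) : x = y := by
  rcases lt_trichotomy x y with hlt | he | hlt
  · exfalso
    have hss : (R.filter (fun v => v < x)) ⊂ (R.filter (fun v => v < y)) := by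
      constructor
      · intro v hv
        rw [mem_filter] at hv ⊢
        exact ⟨hv.1, lt_trans hv.2 hlt⟩
      · intro hsub
        have hxin : x ∈ R.filter (fun v => v < y) := mem_filter.mpr ⟨hx, hlt⟩
        have := hsub hxin
        rw [mem_filter] at this
        exact absurd this.2 (lt_irrefl x)
    exact absurd h (Nat.ne_of_lt (card_lt_card hss))
  · exact he
  · exfalso
    have hss : (R.filter (fun v => v < y)) ⊂ (R.filter (fun v => v < x)) := by
      constructor
      · intro v hv
        rw [mem_filter] at hv ⊢
        exact ⟨hv.1, lt_trans hv.2 hlt⟩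
      · intro hsub
        have hyin : y ∈ R.filter (fun v => v < x) := mem_filter.mpr ⟨hy, hlt⟩
        have := hsub hyin
        rw [mem_filter] at this
        exact absurd this.2 (lt_irrefl y)
    exact absurd h (Nat.ne_of_lt (card_lt_card hss)).symm

lemma phi_mem (hq : q.Prime) (hUlt : U < q) (hk : 2 * ℓ ≤ k) (hl : 1 ≤ ℓ)
    {nu : (Idx ℓ → ℤ) × (Idx ℓ → ℤ)} (hs : Sol k ℓ q N U M nu) :
    Phi k ℓ q U nu ∈ Tgt k ℓ N U M := by
  rw [Tgt, mem_sigma]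
  constructor
  · rw [PF, mem_filter]
    exact ⟨mem_univ _, good_pm hq hUlt hk hl hs⟩
  · rw [Fintype.mem_piFinset]
    intro i
    show (if pm q ℓ nu i = i then ((nu.1 i, nu.2 i) : ℤ × ℤ)
      else if ∀ j, pm q ℓ nu j = pm q ℓ nu i → j ≤ i then ((rk k q U (nu.2 i) : ℤ), 0)
      else (nu.2 i, 0)) ∈ Dbox k N U M ℓ (pm q ℓ nu) i
    unfold Dbox
    by_cases hpi : pm q ℓ nu i = i
    · rw [if_pos hpi, if_pos hpi, mem_product]
      exact ⟨mem_Ioc.mpr ⟨(hs.1 i).1, (hs.1 i).2⟩, mem_Icc.mpr ⟨(hs.2.1 i).1, (hs.2.1 i).2⟩⟩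
    · by_cases hmx : ∀ j, pm q ℓ nu j = pm q ℓ nu i → j ≤ i
      · rw [if_neg hpi, if_pos hmx, if_neg hpi, if_pos hmx, mem_product]
        constructor
        · set R := (Finset.Icc (1 : ℤ) (U : ℤ)).filter
            (fun v : ℤ => ((v : ZMod q)) ^ k = ((nu.2 i : ℤ) : ZMod q) ^ k) with hR
          have hmem : nu.2 i ∈ R := mem_filter.mpr
            ⟨mem_Icc.mpr ⟨(hs.2.1 i).1, (hs.2.1 i).2⟩, rfl⟩
          have h1 : rk k q U (nu.2 i) < R.card := rank_lt hmem
          have h2 : R.card ≤ k := roots_card hq hUlt (by omega) _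
          rw [mem_Icc]
          constructor
          · exact Int.natCast_nonneg _
          · omega
        · simp
      · rw [if_neg hpi, if_neg hmx, if_neg hpi, if_neg hmx, mem_product]
        exact ⟨mem_Icc.mpr ⟨(hs.2.1 i).1, (hs.2.1 i).2⟩, by simp⟩

lemma phi_inj (hq : q.Prime) (hNU : N * U ≤ q) (hU1 : 1 ≤ U) (hUN : U ≤ N) (hl : 1 ≤ ℓ)
    (hk : 2 * ℓ ≤ k) {nu nu' : (Idx ℓ → ℤ) × (Idx ℓ → ℤ)}
    (hs : Sol k ℓ q N U M nu) (hs' : Sol k ℓ q N U M nu')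
    (h : Phi k ℓ q U nu = Phi k ℓ q U nu') : nu = nu' := by
  have hUlt : U < q := hUlt_of hq hNU hU1 hUN
  have hNq : N ≤ q := le_trans (by calc N = N * 1 := (mul_one N).symm
    _ ≤ N * U := Nat.mul_le_mul_left N hU1) hNU
  haveI : Fact q.Prime := ⟨hq⟩
  unfold Phi at h
  injection h with hp hdata
  have hf : ∀ i, (if pm q ℓ nu i = i then ((nu.1 i, nu.2 i) : ℤ × ℤ)
      else if ∀ j, pm q ℓ nu j = pm q ℓ nu i → j ≤ i then ((rk k q U (nu.2 i) : ℤ), 0)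
      else (nu.2 i, 0))
      = (if pm q ℓ nu i = i then (nu'.1 i, nu'.2 i)
      else if ∀ j, pm q ℓ nu j = pm q ℓ nu i → j ≤ i then ((rk k q U (nu'.2 i) : ℤ), 0)
      else (nu'.2 i, 0)) := by
    have hfun := hdata
    intro i
    have h2 := congrFun hfun i
    rw [← hp] at h2
    exact h2
  have hrep : ∀ i, pm q ℓ nu i = i → nu.1 i = nu'.1 i ∧ nu.2 i = nu'.2 i := by
    intro i hpi
    have h2 := hf i
    rw [if_pos hpi, if_pos hpi] at h2
    exact ⟨congrArg Prod.fst h2, congrArg Prod.snd h2⟩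
  have hu2 : ∀ i, nu.2 i = nu'.2 i := by
    intro i
    by_cases hpi : pm q ℓ nu i = i
    · exact (hrep i hpi).2
    by_cases hmx : ∀ j, pm q ℓ nu j = pm q ℓ nu i → j ≤ i
    · have hothers : ∀ j, tm q ℓ nu j = tm q ℓ nu i → j ≠ i → nu.2 j = nu'.2 j := by
        intro j htj hne
        have hpj : pm q ℓ nu j = pm q ℓ nu i := pm_eq_of_tm_eq htj
        by_cases hrj : pm q ℓ nu j = j
        · exact (hrep j hrj).2
        · have hji : j < i := lt_of_le_of_ne (hmx j hpj) hne
          have hnm : ¬ (∀ j', pm q ℓ nu j' = pm q ℓ nu j → j' ≤ j) := by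
            intro hcon
            exact absurd (hcon i (by rw [hpj])) (not_le.mpr hji)
          have h2 := hf j
          rw [if_neg hrj, if_neg hnm, if_neg hrj, if_neg hnm] at h2
          exact congrArg Prod.fst h2
      have hcs := classsum hq hUlt hk hl hs (tm q ℓ nu i)
      have hcs' := classsum hq hUlt hk hl hs' (tm q ℓ nu' i)
      have hclseq : (univ.filter fun j => tm q ℓ nu' j = tm q ℓ nu' i)
          = (univ.filter fun j => tm q ℓ nu j = tm q ℓ nu i) := by
        have e1 := pm_fiber q ℓ nu i
        have e2 := pm_fiber q ℓ nu' i
        unfold cls at e1 e2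
        rw [← e1, ← e2, hp]
      rw [hclseq] at hcs'
      have hmem : i ∈ (univ.filter fun j => tm q ℓ nu j = tm q ℓ nu i) :=
        mem_cls_self q ℓ nu i
      rw [← Finset.add_sum_erase _ _ hmem] at hcs hcs'
      have htail : ∑ j ∈ (univ.filter fun j => tm q ℓ nu j = tm q ℓ nu i).erase i,
            ((eps ℓ j : ℤ) : ZMod q) * ((nu.2 j : ℤ) : ZMod q) ^ k
          = ∑ j ∈ (univ.filter fun j => tm q ℓ nu j = tm q ℓ nu i).erase i,
            ((eps ℓ j : ℤ) : ZMod q) * ((nu'.2 j : ℤ) : ZMod q) ^ k := by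
        apply sum_congr rfl
        intro j hj
        rw [hothers j (mem_filter.mp (mem_of_mem_erase hj)).2 (mem_erase.mp hj).1]
      have hkeq : ((nu.2 i : ℤ) : ZMod q) ^ k = ((nu'.2 i : ℤ) : ZMod q) ^ k := by
        have h1 : ((eps ℓ i : ℤ) : ZMod q) * ((nu.2 i : ℤ) : ZMod q) ^ k
            = ((eps ℓ i : ℤ) : ZMod q) * ((nu'.2 i : ℤ) : ZMod q) ^ k := by
          linear_combination hcs - hcs' - htail
        exact mul_left_cancel₀ (eps_ne_zero hq i) h1
      have hrkeq : rk k q U (nu.2 i) = rk k q U (nu'.2 i) := by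
        have h2 := hf i
        rw [if_neg hpi, if_pos hmx, if_neg hpi, if_pos hmx] at h2
        have h3 : ((rk k q U (nu.2 i) : ℤ)) = ((rk k q U (nu'.2 i) : ℤ)) :=
          congrArg Prod.fst h2
        exact_mod_cast h3
      unfold rk at hrkeq
      rw [← hkeq] at hrkeq
      have hx : nu.2 i ∈ (Finset.Icc (1 : ℤ) (U : ℤ)).filter
          (fun v : ℤ => ((v : ZMod q)) ^ k = ((nu.2 i : ℤ) : ZMod q) ^ k) :=
        mem_filter.mpr ⟨mem_Icc.mpr ⟨(hs.2.1 i).1, (hs.2.1 i).2⟩, rfl⟩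
      have hy : nu'.2 i ∈ (Finset.Icc (1 : ℤ) (U : ℤ)).filter
          (fun v : ℤ => ((v : ZMod q)) ^ k = ((nu.2 i : ℤ) : ZMod q) ^ k) :=
        mem_filter.mpr ⟨mem_Icc.mpr ⟨(hs'.2.1 i).1, (hs'.2.1 i).2⟩, hkeq.symm⟩
      exact rank_inj hx hy hrkeq
    · have h2 := hf i
      rw [if_neg hpi, if_neg hmx, if_neg hpi, if_neg hmx] at h2
      exact congrArg Prod.fst h2
  have hn1 : ∀ i, nu.1 i = nu'.1 i := by
    intro i
    by_cases hpi : pm q ℓ nu i = i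
    · exact (hrep i hpi).1
    · have hrepp : pm q ℓ nu (pm q ℓ nu i) = pm q ℓ nu i := pm_pm q ℓ nu i
      have hcoords := hrep (pm q ℓ nu i) hrepp
      have h1 : ((nu.1 i : ℤ) : ZMod q) = tm q ℓ nu (pm q ℓ nu i) * ((nu.2 i : ℤ) : ZMod q) := by
        rw [tm_pm]
        unfold tm
        rw [mul_assoc, inv_mul_cancel₀ (u_ne_zero hq hUlt hs i), mul_one]
      have h1' : ((nu'.1 i : ℤ) : ZMod q)
          = tm q ℓ nu' (pm q ℓ nu' i) * ((nu'.2 i : ℤ) : ZMod q) := by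
        rw [tm_pm]
        unfold tm
        rw [mul_assoc, inv_mul_cancel₀ (u_ne_zero hq hUlt hs' i), mul_one]
      have h2 : tm q ℓ nu (pm q ℓ nu i) = tm q ℓ nu' (pm q ℓ nu' i) := by
        rw [← hp]
        unfold tm
        rw [hcoords.1, hcoords.2]
      have h3 : ((nu.1 i : ℤ) : ZMod q) = ((nu'.1 i : ℤ) : ZMod q) := by
        rw [h1, h1', ← h2, hu2 i]
      have h4 : ((nu.1 i - nu'.1 i : ℤ) : ZMod q) = 0 := by
        push_cast
        rw [sub_eq_zero]
        exact h3
      rw [ZMod.intCast_zmod_eq_zero_iff_dvd] at h4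
      have h5 := Int.eq_zero_of_abs_lt_dvd h4 (by
        have ha := (hs.1 i).1
        have hb := (hs.1 i).2
        have hc := (hs'.1 i).1
        have hd := (hs'.1 i).2
        rw [abs_lt]
        omega)
      omega
  exact Prod.ext (funext hn1) (funext hu2)

lemma prod_card (hUN : U ≤ N) (hk : 2 * ℓ ≤ k) (hl : 1 ≤ ℓ)
    {p : Idx ℓ → Idx ℓ} (hgood : Good ℓ p) :
    ∏ i : Idx ℓ, (Dbox k N U M ℓ p i).card ≤ k ^ ℓ * (N ^ ℓ * U ^ ℓ) := by
  obtain ⟨hg1, hg2, hg3⟩ := hgood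
  classical
  set A := univ.filter (fun i : Idx ℓ => p i = i) with hA
  set m := A.card with hm
  set B := (univ.filter (fun i : Idx ℓ => ¬ p i = i)).filter
    (fun i => ∀ j, p j = p i → j ≤ i) with hB
  set Cs := (univ.filter (fun i : Idx ℓ => ¬ p i = i)).filter
    (fun i => ¬ ∀ j, p j = p i → j ≤ i) with hCs
  have hBcard : B.card = m := by
    rw [hm, hA]
    apply card_bij (fun i _ => p i)
    · intro a ha
      rw [mem_filter]
      exact ⟨mem_univ _, hg2 a⟩
    · intro a1 h1 a2 h2 heq
      rw [hB, mem_filter, mem_filter] at h1 h2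
      have hmx1 := h1.2
      have hmx2 := h2.2
      have l12 : a1 ≤ a2 := hmx2 a1 heq
      have l21 : a2 ≤ a1 := hmx1 a2 heq.symm
      exact le_antisymm l12 l21
    · intro c hc
      rw [mem_filter] at hc
      obtain ⟨j0, hj0ne, hj0⟩ := hg3 c hc.2
      have hfibne : (univ.filter (fun j : Idx ℓ => p j = c)).Nonempty :=
        ⟨j0, mem_filter.mpr ⟨mem_univ _, hj0⟩⟩
      set mx := (univ.filter (fun j : Idx ℓ => p j = c)).max' hfibne with hmx
      have hmxmem : mx ∈ univ.filter (fun j : Idx ℓ => p j = c) := Finset.max'_mem _ _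
      have hpmx : p mx = c := (mem_filter.mp hmxmem).2
      have hcj0 : c < j0 := by
        have hle := hg1 j0
        rw [hj0] at hle
        exact lt_of_le_of_ne hle (Ne.symm hj0ne)
      have hj0mx : j0 ≤ mx := Finset.le_max' (univ.filter (fun j : Idx ℓ => p j = c)) j0
        (mem_filter.mpr ⟨mem_univ _, hj0⟩)
      have hcmx : c < mx := lt_of_lt_of_le hcj0 hj0mx
      have hmxne : ¬ p mx = mx := by
        rw [hpmx]
        intro hcon
        rw [hcon] at hcmx
        exact lt_irrefl _ hcmx
      refine ⟨mx, ?_, hpmx⟩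
      rw [hB, mem_filter, mem_filter]
      refine ⟨⟨mem_univ _, hmxne⟩, ?_⟩
      intro j hj
      rw [hpmx] at hj
      exact Finset.le_max' (univ.filter (fun j' : Idx ℓ => p j' = c)) j
        (mem_filter.mpr ⟨mem_univ _, hj⟩)
  have hcards : A.card + ((univ.filter (fun i : Idx ℓ => ¬ p i = i))).card = 2 * ℓ := by
    rw [hA]
    rw [Finset.card_filter_add_card_filter_not (p := fun i : Idx ℓ => p i = i)]
    simp
  have hcards2 : B.card + Cs.card = (univ.filter (fun i : Idx ℓ => ¬ p i = i)).card := by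
    rw [hB, hCs]
    rw [Finset.card_filter_add_card_filter_not
      (p := fun i : Idx ℓ => ∀ j, p j = p i → j ≤ i)]
  have hmle : m ≤ ℓ := by omega
  have hCscard : Cs.card = 2 * ℓ - 2 * m := by omega
  have hsplit : ∏ i : Idx ℓ, (Dbox k N U M ℓ p i).card
      = (N * U) ^ m * (k ^ m * U ^ (2 * ℓ - 2 * m)) := by
    rw [← Finset.prod_filter_mul_prod_filter_not univ (fun i : Idx ℓ => p i = i)]
    have e1 : ∏ i ∈ A, (Dbox k N U M ℓ p i).card = (N * U) ^ m := by
      rw [Finset.prod_congr rfl (fun i hi => ?_), Finset.prod_const, hm]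
      rw [hA, mem_filter] at hi
      rw [Dbox, if_pos hi.2, Finset.card_product, Int.card_Ioc, Int.card_Icc]
      simp
    have e2 : ∏ i ∈ (univ.filter (fun i : Idx ℓ => ¬ p i = i)), (Dbox k N U M ℓ p i).card
        = k ^ m * U ^ (2 * ℓ - 2 * m) := by
      rw [← Finset.prod_filter_mul_prod_filter_not
        (univ.filter (fun i : Idx ℓ => ¬ p i = i)) (fun i => ∀ j, p j = p i → j ≤ i)]
      have e3 : ∏ i ∈ B, (Dbox k N U M ℓ p i).card = k ^ m := by
        rw [Finset.prod_congr rfl (fun i hi => ?_), Finset.prod_const, hBcard]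
        rw [hB, mem_filter, mem_filter] at hi
        rw [Dbox, if_neg hi.1.2, if_pos hi.2, Finset.card_product, Int.card_Icc]
        simp
      have e4 : ∏ i ∈ Cs, (Dbox k N U M ℓ p i).card = U ^ (2 * ℓ - 2 * m) := by
        rw [Finset.prod_congr rfl (fun i hi => ?_), Finset.prod_const, hCscard]
        rw [hCs, mem_filter, mem_filter] at hi
        rw [Dbox, if_neg hi.1.2, if_neg hi.2, Finset.card_product, Int.card_Icc]
        simp
      rw [← hB, ← hCs, e3, e4]
    rw [e1, e2]
  rw [hsplit]
  set e := ℓ - m with he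
  have hleq : ℓ = m + e := by omega
  have h2e : 2 * ℓ - 2 * m = e + e := by omega
  calc (N * U) ^ m * (k ^ m * U ^ (2 * ℓ - 2 * m))
      = (N ^ m * U ^ m) * (k ^ m * (U ^ e * U ^ e)) := by rw [mul_pow, h2e, pow_add]
    _ ≤ (N ^ m * U ^ m) * ((k ^ m * k ^ e) * (N ^ e * U ^ e)) := by
        apply Nat.mul_le_mul_left
        have hUN' : U ^ e ≤ N ^ e := Nat.pow_le_pow_left hUN e
        calc k ^ m * (U ^ e * U ^ e) ≤ k ^ m * (N ^ e * U ^ e) :=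
              Nat.mul_le_mul_left _ (Nat.mul_le_mul_right _ hUN')
          _ ≤ (k ^ m * k ^ e) * (N ^ e * U ^ e) :=
              Nat.mul_le_mul_right _ (Nat.le_mul_of_pos_right _ (by
                have : 0 < k := by omega
                exact Nat.pow_pos this))
    _ = k ^ ℓ * (N ^ ℓ * U ^ ℓ) := by
        rw [hleq, pow_add, pow_add, pow_add]
        ring

lemma tgt_card (hUN : U ≤ N) (hk : 2 * ℓ ≤ k) (hl : 1 ≤ ℓ) :
    (Tgt k ℓ N U M).card ≤ (2 * ℓ) ^ (2 * ℓ) * (k ^ ℓ * (N ^ ℓ * U ^ ℓ)) := by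
  rw [Tgt, card_sigma]
  calc ∑ p ∈ PF ℓ, (Fintype.piFinset (Dbox k N U M ℓ p)).card
      ≤ ∑ _p ∈ PF ℓ, k ^ ℓ * (N ^ ℓ * U ^ ℓ) := by
        apply sum_le_sum
        intro p hp
        have hgood : Good ℓ p := by
          rw [PF, mem_filter] at hp
          exact hp.2
        rw [Fintype.card_piFinset]
        exact prod_card hUN hk hl hgood
    _ = (PF ℓ).card * (k ^ ℓ * (N ^ ℓ * U ^ ℓ)) := by rw [sum_const, smul_eq_mul]
    _ ≤ (2 * ℓ) ^ (2 * ℓ) * (k ^ ℓ * (N ^ ℓ * U ^ ℓ)) := by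
        apply Nat.mul_le_mul_right
        calc (PF ℓ).card ≤ (univ : Finset (Idx ℓ → Idx ℓ)).card := card_filter_le _ _
          _ = (2 * ℓ) ^ (2 * ℓ) := by rw [card_univ, Fintype.card_fun, Fintype.card_fin]

end

end Stmt8


/-- `Icount k ℓ q N U M` is the number of tuples `(n₁,…,n_{2ℓ}, u₁,…,u_{2ℓ})` with
`M < nᵢ ≤ M + N`, `1 ≤ uᵢ ≤ U` satisfying
`n₁^j u₁^{k-j} + ⋯ + n_ℓ^j u_ℓ^{k-j} ≡ n_{ℓ+1}^j u_{ℓ+1}^{k-j} + ⋯ + n_{2ℓ}^j u_{2ℓ}^{k-j} (mod q)`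
for all `j = 0, …, 2ℓ - 1`. -/
noncomputable def Icount (k ℓ q N U : ℕ) (M : ℤ) : ℕ :=
  Nat.card {nu : (Fin (2 * ℓ) → ℤ) × (Fin (2 * ℓ) → ℤ) //
    (∀ i, M < nu.1 i ∧ nu.1 i ≤ M + N) ∧ (∀ i, 1 ≤ nu.2 i ∧ nu.2 i ≤ (U : ℤ)) ∧
    (∀ j : ℕ, j < 2 * ℓ →
      (q : ℤ) ∣ ∑ i : Fin (2 * ℓ),
        (if (i : ℕ) < ℓ then (1 : ℤ) else -1) * (nu.1 i) ^ j * (nu.2 i) ^ (k - j))}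

namespace Stmt8
section
variable {k ℓ q N U : ℕ} {M : ℤ}

lemma main_nat (hq : q.Prime) (hNU : N * U ≤ q) (hU1 : 1 ≤ U) (hUN : U ≤ N)
    (hl : 1 ≤ ℓ) (hk : 2 * ℓ ≤ k) :
    Icount k ℓ q N U M ≤ (2 * ℓ) ^ (2 * ℓ) * (k ^ ℓ * (N ^ ℓ * U ^ ℓ)) := by
  have hUlt := hUlt_of hq hNU hU1 hUN
  have hle : Icount k ℓ q N U M ≤ (Tgt k ℓ N U M).card := by
    rw [Icount, ← Nat.card_eq_finsetCard]
    have hinj : Function.Injective (fun s : {nu : (Fin (2 * ℓ) → ℤ) × (Fin (2 * ℓ) → ℤ) //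
        (∀ i, M < nu.1 i ∧ nu.1 i ≤ M + N) ∧ (∀ i, 1 ≤ nu.2 i ∧ nu.2 i ≤ (U : ℤ)) ∧
        (∀ j : ℕ, j < 2 * ℓ →
          (q : ℤ) ∣ ∑ i : Fin (2 * ℓ),
            (if (i : ℕ) < ℓ then (1 : ℤ) else -1) * (nu.1 i) ^ j * (nu.2 i) ^ (k - j))} =>
        (⟨Phi k ℓ q U s.1, phi_mem hq hUlt hk hl s.2⟩ : {x // x ∈ Tgt k ℓ N U M})) := by
      intro s s' hss
      apply Subtype.ext
      exact phi_inj hq hNU hU1 hUN hl hk s.2 s'.2 (congrArg Subtype.val hss)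
    exact Nat.card_le_card_of_injective _ hinj
  exact le_trans hle (tgt_card hUN hk hl)

end
end Stmt8

theorem stmt_8 (k ℓ : ℕ) (hℓ : 1 ≤ ℓ) (hk : 2 * ℓ ≤ k) :
    ∃ C : ℝ, 0 < C ∧ ∀ (q N U : ℕ) (M : ℤ), q.Prime →
      N * U ≤ q → 1 ≤ U → U ≤ N →
      (Icount k ℓ q N U M : ℝ) ≤ C * ((N : ℝ) * U) ^ ℓ * (Real.log q) ^ (ℓ - 1) := by
  have hlog2pos : (0 : ℝ) < Real.log 2 := Real.log_pos (by norm_num)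
  have hpowpos : (0 : ℝ) < (Real.log 2) ^ (ℓ - 1) := pow_pos hlog2pos _
  refine ⟨(((2 * ℓ) ^ (2 * ℓ) * k ^ ℓ : ℕ) : ℝ) / (Real.log 2) ^ (ℓ - 1), ?_, ?_⟩
  · apply div_pos _ hpowpos
    have h1 : 0 < (2 * ℓ) ^ (2 * ℓ) * k ^ ℓ :=
      Nat.mul_pos (Nat.pow_pos (by omega)) (Nat.pow_pos (by omega))
    exact_mod_cast h1
  · intro q N U M hq hNU hU1 hUN
    have hmain := Stmt8.main_nat (k := k) (ℓ := ℓ) (q := q) (N := N) (U := U) (M := M)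
      hq hNU hU1 hUN hℓ hk
    have hcast : (Icount k ℓ q N U M : ℝ)
        ≤ (((2 * ℓ) ^ (2 * ℓ) * (k ^ ℓ * (N ^ ℓ * U ^ ℓ)) : ℕ) : ℝ) := Nat.cast_le.mpr hmain
    have hlog2 : Real.log 2 ≤ Real.log q := by
      apply Real.log_le_log (by norm_num)
      exact_mod_cast hq.two_le
    have hpow : (Real.log 2) ^ (ℓ - 1) ≤ (Real.log q) ^ (ℓ - 1) :=
      pow_le_pow_left₀ (le_of_lt hlog2pos) hlog2 _
    calc (Icount k ℓ q N U M : ℝ)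
        ≤ (((2 * ℓ) ^ (2 * ℓ) * (k ^ ℓ * (N ^ ℓ * U ^ ℓ)) : ℕ) : ℝ) := hcast
      _ = (((2 * ℓ) ^ (2 * ℓ) * k ^ ℓ : ℕ) : ℝ) * ((N : ℝ) * U) ^ ℓ := by push_cast; ring
      _ = (((2 * ℓ) ^ (2 * ℓ) * k ^ ℓ : ℕ) : ℝ) / (Real.log 2) ^ (ℓ - 1)
          * ((N : ℝ) * U) ^ ℓ * (Real.log 2) ^ (ℓ - 1) := by
          field_simp
      _ ≤ (((2 * ℓ) ^ (2 * ℓ) * k ^ ℓ : ℕ) : ℝ) / (Real.log 2) ^ (ℓ - 1)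
          * ((N : ℝ) * U) ^ ℓ * (Real.log q) ^ (ℓ - 1) := by
          apply mul_le_mul_of_nonneg_left hpow
          apply mul_nonneg
          · positivity
          · positivity
end
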